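/- arXiv:2107.00634 — 6 statements merged into one kernel-verified Lean document; each statement's English description precedes it below -/
import Mathlib

section
/- Let U ⊆ ℝⁿ be open, X: U → ℝⁿ a C^l vector field (l ∈ ℕ ∪ {∞}), and K ⊆ U compact. Then there exists a C^∞ function f: U → (0,∞) with f ≡ 1 on K such that the local flow of the vector field fX is complete, i.e. every maximal solution of ẋ = f(x)X(x) is defined for all t ∈ ℝ. -/
open Set Metric
open scoped Manifold NNReal

noncomputable section

abbrev Euc (n : ℕ) := EuclideanSpace ℝ (Fin n)

/-- `p 0, …, p m` is an `(ε,T)`-chain for the flow `Φ` in `U`. -/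
def IsEpsTChain {n : ℕ} (Φ : ℝ → Euc n → Euc n) (U : Set (Euc n))
    (ε : Euc n → ℝ) (T : ℝ) (m : ℕ) (p : ℕ → Euc n) : Prop :=
  1 ≤ m ∧ (∀ i ≤ m, p i ∈ U) ∧
    ∃ t : ℕ → ℝ, ∀ i < m, T ≤ t i ∧ ‖Φ (t i) (p i) - p (i + 1)‖ ≤ ε (Φ (t i) (p i))

/-- The chain recurrent set of the flow `Φ` on `U`. -/
def chainRecurrentSet {n : ℕ} (Φ : ℝ → Euc n → Euc n) (U : Set (Euc n)) : Set (Euc n) :=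
  {p | p ∈ U ∧ ∀ T > (0:ℝ), ∀ ε : Euc n → ℝ, ContinuousOn ε U → (∀ x ∈ U, 0 < ε x) →
    ∃ m q, IsEpsTChain Φ U ε T m q ∧ q 0 = p ∧ q m = p}

/-- Chain equivalence: `p ∼ q` iff there is `T > 0` such that for all continuous positive `ε`
there is an `(ε,T)`-chain from `p` to `p` containing `q`. -/
def ChainEquiv {n : ℕ} (Φ : ℝ → Euc n → Euc n) (U : Set (Euc n)) (p q : Euc n) : Prop :=
  ∃ T > (0:ℝ), ∀ ε : Euc n → ℝ, ContinuousOn ε U → (∀ x ∈ U, 0 < ε x) →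
    ∃ m r, IsEpsTChain Φ U ε T m r ∧ r 0 = p ∧ r m = p ∧ ∃ i ≤ m, r i = q

/-- `Φ` is the complete flow of the vector field `X` on `U`: orbits stay in `U`, start at the
initial point, solve `ẋ = X(x)` and are the unique such global solutions. -/
def IsCompleteFlow {n : ℕ} (X : Euc n → Euc n) (U : Set (Euc n))
    (Φ : ℝ → Euc n → Euc n) : Prop :=
  (∀ p ∈ U, ∀ t : ℝ, Φ t p ∈ U) ∧
  (∀ p ∈ U, Φ 0 p = p) ∧
  (∀ p ∈ U, ∀ t : ℝ, HasDerivAt (fun s => Φ s p) (X (Φ t p)) t) ∧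
  (∀ p ∈ U, ∀ γ : ℝ → Euc n, γ 0 = p → (∀ t, γ t ∈ U) →
    (∀ t, HasDerivAt γ (X (γ t)) t) → ∀ t, γ t = Φ t p)

/-- The orbital derivative `∇τ(p)·X(p)`. -/
def orbDeriv {n : ℕ} (X : Euc n → Euc n) (τ : Euc n → ℝ) (p : Euc n) : ℝ :=
  inner ℝ (gradient τ p) (X p)

/-- A `C^l` Lyapunov function for `X` on `U`. -/
def IsLyapunov {n : ℕ} (X : Euc n → Euc n) (U : Set (Euc n)) (l : ℕ∞)
    (τ : Euc n → ℝ) : Prop :=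
  ContDiffOn ℝ l τ U ∧ (∀ p ∈ U, orbDeriv X τ p ≤ 0) ∧
    ∀ p ∈ U, gradient τ p ≠ 0 → orbDeriv X τ p < 0

/-- A complete Lyapunov function: a Lyapunov function, strictly decreasing along orbits outside
the chain recurrent set, whose set of critical values is nowhere dense, and whose critical level
sets intersected with the chain recurrent set are chain transitive components. -/
def IsCompleteLyapunov {n : ℕ} (X : Euc n → Euc n) (U : Set (Euc n))
    (Φ : ℝ → Euc n → Euc n) (l : ℕ∞) (τ : Euc n → ℝ) : Prop :=
  IsLyapunov X U l τ ∧
  (∀ p ∈ U \ chainRecurrentSet Φ U, ∀ t > (0:ℝ), τ (Φ t p) < τ p) ∧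
  interior (closure (τ '' chainRecurrentSet Φ U)) = ∅ ∧
  ∀ c ∈ τ '' chainRecurrentSet Φ U, ∃ p ∈ chainRecurrentSet Φ U,
    τ ⁻¹' {c} ∩ chainRecurrentSet Φ U = {q ∈ chainRecurrentSet Φ U | ChainEquiv Φ U p q}

/-- Smooth positive minorant of a continuous positive function on an open set,
equal to `1` on a compact subset where the function is `≥ 2`. -/
lemma exists_smooth_minorant {n : ℕ} {U : Set (Euc n)} (hU : IsOpen U) {g : Euc n → ℝ}
    (hg : ContinuousOn g U) (hgpos : ∀ x ∈ U, 0 < g x)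
    {K : Set (Euc n)} (hK : IsCompact K) (hKU : K ⊆ U) (hgK : ∀ x ∈ K, 2 ≤ g x) :
    ∃ f : Euc n → ℝ, ContDiffOn ℝ ((⊤ : ℕ∞) : WithTop ℕ∞) f U ∧
      (∀ x ∈ U, 0 < f x ∧ f x ≤ g x) ∧ ∀ x ∈ K, f x = 1 := by
  classical
  set M : TopologicalSpace.Opens (Euc n) := ⟨U, hU⟩ with hM
  haveI : LocallyCompactSpace M :=
    hU.isOpenEmbedding_subtypeVal.locallyCompactSpace
  -- a smooth function `G` on `U` with `0 < G < min g 1`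
  have Hloc : ∀ x : M, ∃ c : ℝ, ∀ᶠ y : M in nhds x, c ∈ Ioo (0:ℝ) (min (g ↑y) 1) := by
    intro x
    refine ⟨min (g ↑x) 1 / 2, ?_⟩
    have hgc : ContinuousAt (fun y : M => g ↑y) x :=
      (hg.continuousAt (hU.mem_nhds x.2)).comp continuousAt_subtype_val
    have h1 : ContinuousAt (fun y : M => min (g ↑y) 1) x := hgc.min continuousAt_const
    have hx : 0 < min (g ↑x) 1 := lt_min (hgpos _ x.2) one_pos
    have : ∀ᶠ y : M in nhds x, min (g ↑y) 1 ∈ Ioi (min (g ↑x) 1 / 2) :=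
      h1.eventually_mem (isOpen_Ioi.mem_nhds (mem_Ioi.mpr (half_lt_self hx)))
    filter_upwards [this] with y hy
    exact ⟨by positivity, hy⟩
  obtain ⟨G, hG⟩ := exists_contMDiffMap_forall_mem_convex_of_local_const (F := ℝ) (M := M)
      (n := (⊤ : ℕ∞))
      (𝓘(ℝ, Euc n)) (t := fun x : M => Ioo (0:ℝ) (min (g x) 1))
      (fun x => convex_Ioo _ _) Hloc
  -- smooth Urysohn function on `M`: 1 on `K`, 0 outside `V := {g > 1}`
  set V : Set (Euc n) := {x ∈ U | 1 < g x} with hV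
  have hVopen : IsOpen V := by
    have h := hg.isOpen_inter_preimage (t := Ioi (1:ℝ)) hU isOpen_Ioi
    have : V = U ∩ g ⁻¹' Ioi (1:ℝ) := by ext y; simp [hV, and_comm]
    rw [this]; exact h
  obtain ⟨χ, hχ0, hχ1, hχ01⟩ := exists_contMDiffMap_zero_one_of_isClosed (M := M)
      (n := (⊤ : ℕ∞)) (𝓘(ℝ, Euc n))
      (s := (Subtype.val ⁻¹' V)ᶜ) (t := Subtype.val ⁻¹' K)
      (isClosed_compl_iff.mpr (hVopen.preimage continuous_subtype_val))
      (hK.isClosed.preimage continuous_subtype_val)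
      (by
        rw [disjoint_compl_left_iff_subset]
        intro y hy
        exact ⟨hKU hy, lt_of_lt_of_le one_lt_two (hgK _ hy)⟩)
  -- combine
  set F : Euc n → ℝ := fun x => if h : x ∈ U then
      χ ⟨x, h⟩ + (1 - χ ⟨x, h⟩) * G ⟨x, h⟩ else 1 with hF
  have hFval : ∀ (x : Euc n) (h : x ∈ U), F x = χ ⟨x, h⟩ + (1 - χ ⟨x, h⟩) * G ⟨x, h⟩ := by
    intro x h; simp [hF, h]
  refine ⟨F, ?_, ?_, ?_⟩
  · -- smoothness
    intro x hx
    have hsm : ContMDiffAt 𝓘(ℝ, Euc n) 𝓘(ℝ, ℝ) ((⊤ : ℕ∞) : WithTop ℕ∞) (fun y : M => F ↑y) ⟨x, hx⟩ := by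
      have : (fun y : M => F ↑y) = fun y : M => χ y + (1 - χ y) * G y := by
        funext y; rw [hFval ↑y y.2]
      rw [this]
      exact (χ.contMDiff.contMDiffAt).add
        (((contMDiff_const.sub χ.contMDiff).contMDiffAt).mul (G.contMDiff.contMDiffAt))
    have := (contMDiffAt_subtype_iff.mp hsm).contDiffAt
    exact this.contDiffWithinAt
  · -- bounds
    intro x hx
    obtain ⟨hG1, hG2⟩ := hG ⟨x, hx⟩
    obtain ⟨hc1, hc2⟩ := hχ01 ⟨x, hx⟩
    rw [hFval x hx]
    constructor
    · nlinarith [lt_min_iff.mp hG2]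
    · by_cases hxV : x ∈ V
      · have h1g : 1 ≤ g x := le_of_lt hxV.2
        have : G ⟨x, hx⟩ ≤ g x := le_of_lt (lt_of_lt_of_le hG2 (min_le_left _ _))
        nlinarith
      · have : χ ⟨x, hx⟩ = 0 := hχ0 (by simpa using hxV)
        rw [this]
        have : G ⟨x, hx⟩ ≤ g x := le_of_lt (lt_of_lt_of_le hG2 (min_le_left _ _))
        linarith
  · intro x hx
    have : χ ⟨x, hKU hx⟩ = 1 := hχ1 (by simpa using hx)
    rw [hFval x (hKU hx), this]; ring

/-- Picard–Lindelöf with the information that the solution stays in the closed ball. -/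
lemma pl_exists_mem {E : Type*} [NormedAddCommGroup E] [NormedSpace ℝ E] [CompleteSpace E]
    {v : ℝ → E → E} {tMin tMax : ℝ} {t₀ : Icc tMin tMax} {x₀ : E} {a L K : ℝ≥0}
    (hpl : IsPicardLindelof v t₀ x₀ a 0 L K) :
    ∃ f : ℝ → E, f t₀ = x₀ ∧ ∀ t ∈ Icc tMin tMax,
      f t ∈ closedBall x₀ a ∧ HasDerivWithinAt f (v t (f t)) (Icc tMin tMax) t := by
  have hx : x₀ ∈ closedBall x₀ ((0 : ℝ≥0) : ℝ) := mem_closedBall_self le_rfl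
  obtain ⟨α, hα⟩ := ODE.FunSpace.exists_isFixedPt_next hpl hx
  refine ⟨α.compProj, by rw [ODE.FunSpace.compProj_val, ← hα, ODE.FunSpace.next_apply₀],
    fun t ht ↦ ⟨α.compProj_mem_closedBall hpl.mul_max_le, ?_⟩⟩
  apply ODE.hasDerivWithinAt_picard_Icc t₀.2 hpl.continuousOn_uncurry
    α.continuous_compProj.continuousOn (fun _ ht' ↦ α.compProj_mem_closedBall hpl.mul_max_le)
    x₀ ht |>.congr_of_mem _ ht
  intro t' ht'
  nth_rw 1 [← hα]
  rw [ODE.FunSpace.compProj_of_mem ht', ODE.FunSpace.next_apply]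

/-- A `C¹` map on an open set is Lipschitz on any compact convex subset. -/
lemma lipschitzOnWith_of_contDiffOn {n : ℕ} {U : Set (Euc n)} (hU : IsOpen U)
    {Y : Euc n → Euc n} (hY : ContDiffOn ℝ 1 Y U) {s : Set (Euc n)}
    (hs : Convex ℝ s) (hsc : IsCompact s) (hsU : s ⊆ U) :
    ∃ L : ℝ≥0, LipschitzOnWith L Y s := by
  have hcont : ContinuousOn (fderiv ℝ Y) s :=
    (hY.continuousOn_fderiv_of_isOpen hU le_rfl).mono hsU
  obtain ⟨M, hM⟩ := hsc.exists_bound_of_continuousOn hcont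
  refine ⟨⟨max M 0, le_max_right _ _⟩, hs.lipschitzOnWith_of_nnnorm_fderiv_le
    (fun x hx => hY.contDiffAt (hU.mem_nhds (hsU hx)) |>.differentiableAt one_ne_zero) ?_⟩
  intro x hx
  have h1 := hM x hx
  have : ‖fderiv ℝ Y x‖ ≤ max M 0 := le_trans h1 (le_max_left _ _)
  apply NNReal.coe_le_coe.mp
  exact this

section ODE

variable {n : ℕ} {U : Set (Euc n)} {Y : Euc n → Euc n} {d : Euc n → ℝ} {C : ℝ}

/-- Uniform-time local existence for a vector field controlled by a "safety radius" function. -/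
lemma local_sol (hU : IsOpen U) (hY : ContDiffOn ℝ 1 Y U) (hC : 0 < C)
    (hd : ∀ x ∈ U, 0 < d x)
    (hball : ∀ x ∈ U, closedBall x (d x) ⊆ U)
    (hbd : ∀ x ∈ U, ∀ y ∈ closedBall x (d x), ‖Y y‖ ≤ C * d x)
    {x : Euc n} (hx : x ∈ U) (t₀ : ℝ) :
    ∃ γ : ℝ → Euc n, γ t₀ = x ∧ ∀ t ∈ Icc (t₀ - 1/C) (t₀ + 1/C),
      γ t ∈ U ∧ HasDerivWithinAt γ (Y (γ t)) (Icc (t₀ - 1/C) (t₀ + 1/C)) t := by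
  obtain ⟨L, hL⟩ := lipschitzOnWith_of_contDiffOn hU hY (convex_closedBall x (d x))
    (isCompact_closedBall x (d x)) (hball x hx)
  have hdx := hd x hx
  have ht₀m : t₀ ∈ Icc (t₀ - 1/C) (t₀ + 1/C) := by
    constructor <;> [linarith [le_of_lt (div_pos one_pos hC)];
      linarith [le_of_lt (div_pos one_pos hC)]]
  have hpl : IsPicardLindelof (fun _ => Y) (tmin := t₀ - 1/C) (tmax := t₀ + 1/C) ⟨t₀, ht₀m⟩ x
      ⟨d x, hdx.le⟩ 0 ⟨C * d x, mul_nonneg hC.le hdx.le⟩ L :=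
    { lipschitzOnWith := fun t _ => hL
      continuousOn := fun _ _ => continuousOn_const
      norm_le := fun t _ y hy => hbd x hx y hy
      mul_max_le := by
        show C * d x * max (t₀ + 1/C - t₀) (t₀ - (t₀ - 1/C)) ≤ d x - ((0 : ℝ≥0) : ℝ)
        have h1 : t₀ + 1/C - t₀ = 1/C := by ring
        have h2 : t₀ - (t₀ - 1/C) = 1/C := by ring
        rw [h1, h2, max_self, NNReal.coe_zero, sub_zero, mul_one_div, mul_comm C (d x), mul_div_assoc,
          div_self hC.ne', mul_one] }
  obtain ⟨γ, hγ0, hγ⟩ := pl_exists_mem hpl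
  exact ⟨γ, hγ0, fun t ht => ⟨hball x hx (hγ t ht).1, (hγ t ht).2⟩⟩

/-- Glue two solutions matching at the common endpoint. -/
lemma glue_sol {a b c : ℝ} (hab : a ≤ b) (hbc : b ≤ c) {γ δ : ℝ → Euc n}
    (hγ : ∀ t ∈ Icc a b, γ t ∈ U ∧ HasDerivWithinAt γ (Y (γ t)) (Icc a b) t)
    (hδ : ∀ t ∈ Icc b c, δ t ∈ U ∧ HasDerivWithinAt δ (Y (δ t)) (Icc b c) t)
    (hglue : γ b = δ b) :
    ∃ η : ℝ → Euc n, (∀ t ∈ Icc a b, η t = γ t) ∧ (∀ t ∈ Icc b c, η t = δ t) ∧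
      ∀ t ∈ Icc a c, η t ∈ U ∧ HasDerivWithinAt η (Y (η t)) (Icc a c) t := by
  classical
  set η : ℝ → Euc n := fun t => if t ≤ b then γ t else δ t with hη
  have heγ : ∀ t ∈ Icc a b, η t = γ t := fun t ht => if_pos ht.2
  have heδ : ∀ t ∈ Icc b c, η t = δ t := by
    intro t ht
    by_cases h : t ≤ b
    · have : t = b := le_antisymm h ht.1
      simp only [hη, this, hglue]
      simp
    · exact if_neg h
  refine ⟨η, heγ, heδ, fun t ht => ?_⟩
  have hicc : Icc a c = Icc a b ∪ Icc b c := (Icc_union_Icc_eq_Icc hab hbc).symm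
  by_cases h : t ≤ b
  · have htab : t ∈ Icc a b := ⟨ht.1, h⟩
    have hmem : η t ∈ U := (heγ t htab) ▸ (hγ t htab).1
    refine ⟨hmem, ?_⟩
    rw [hicc]
    refine HasDerivWithinAt.union ?_ ?_
    · exact ((hγ t htab).2.congr (fun s hs => heγ s hs) (heγ t htab)).congr_deriv
        (by rw [heγ t htab])
    · rcases eq_or_lt_of_le h with rfl | hlt
      · exact ((hδ t ⟨le_refl _, hbc⟩).2.congr (fun s hs => heδ s hs)
          (heδ t ⟨le_refl _, hbc⟩)).congr_deriv (by rw [heδ t ⟨le_refl _, hbc⟩])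
      · have : t ∉ closure (Icc b c) := by
          rw [closure_Icc]
          intro hc
          exact absurd hc.1 (not_le.mpr hlt)
        exact hasDerivWithinAt_iff_hasFDerivWithinAt.mpr
          (HasFDerivWithinAt.of_notMem_closure this)
  · push_neg at h
    have htbc : t ∈ Icc b c := ⟨le_of_lt h, ht.2⟩
    have hmem : η t ∈ U := (heδ t htbc) ▸ (hδ t htbc).1
    refine ⟨hmem, ?_⟩
    rw [hicc]
    refine HasDerivWithinAt.union ?_ ?_
    · have : t ∉ closure (Icc a b) := by
        rw [closure_Icc]
        intro hc
        exact absurd hc.2 (not_le.mpr h)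
      exact hasDerivWithinAt_iff_hasFDerivWithinAt.mpr
        (HasFDerivWithinAt.of_notMem_closure this)
    · exact ((hδ t htbc).2.congr (fun s hs => heδ s hs) (heδ t htbc)).congr_deriv
        (by rw [heδ t htbc])

/-- Uniqueness of solutions staying in `U` on an open interval. -/
lemma sol_unique (hU : IsOpen U) (hY : ContDiffOn ℝ 1 Y U) {a b t₀ : ℝ} (ht₀ : t₀ ∈ Ioo a b)
    {γ₁ γ₂ : ℝ → Euc n}
    (h₁ : ∀ t ∈ Ioo a b, γ₁ t ∈ U ∧ HasDerivAt γ₁ (Y (γ₁ t)) t)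
    (h₂ : ∀ t ∈ Ioo a b, γ₂ t ∈ U ∧ HasDerivAt γ₂ (Y (γ₂ t)) t)
    (heq : γ₁ t₀ = γ₂ t₀) : EqOn γ₁ γ₂ (Ioo a b) := by
  set s := {t | γ₁ t = γ₂ t} ∩ Ioo a b with hs
  suffices hsub : Ioo a b ⊆ s from fun t ht => ((subset_def ▸ hsub) t ht).1
  apply isPreconnected_Ioo.subset_of_closure_inter_subset (s := Ioo a b) (u := s) _
    ⟨t₀, ⟨ht₀, ⟨heq, ht₀⟩⟩⟩
  · rw [hs, inter_comm, ← Subtype.image_preimage_val, inter_comm, ← Subtype.image_preimage_val,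
      image_subset_image_iff Subtype.val_injective, preimage_setOf_eq]
    intro t ht
    rw [mem_preimage, ← closure_subtype] at ht
    revert ht t
    apply IsClosed.closure_subset (isClosed_eq _ _)
    · rw [continuous_iff_continuousAt]
      rintro ⟨tt, htt⟩
      exact ((h₁ tt htt).2.continuousAt).comp continuousAt_subtype_val
    · rw [continuous_iff_continuousAt]
      rintro ⟨tt, htt⟩
      exact ((h₂ tt htt).2.continuousAt).comp continuousAt_subtype_val
  · rw [isOpen_iff_mem_nhds]
    intro t₁ ht₁
    obtain ⟨heq₁', hIoo₁⟩ := ht₁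
    have heq₁ : γ₁ t₁ = γ₂ t₁ := heq₁'
    have hx : γ₁ t₁ ∈ U := (h₁ t₁ hIoo₁).1
    -- local Lipschitz neighbourhood
    obtain ⟨L, sL, hsL, hLip⟩ :=
      (hY.contDiffAt (hU.mem_nhds hx)).exists_lipschitzOnWith
    -- both curves eventually satisfy the ODE with values in sL
    have hev₁ : ∀ᶠ t in nhds t₁, HasDerivAt γ₁ (Y (γ₁ t)) t ∧ γ₁ t ∈ sL := by
      have hc : ContinuousAt γ₁ t₁ := (h₁ t₁ hIoo₁).2.continuousAt
      filter_upwards [hc.preimage_mem_nhds hsL, Ioo_mem_nhds hIoo₁.1 hIoo₁.2] with t hta htb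
      exact ⟨(h₁ t htb).2, hta⟩
    have hev₂ : ∀ᶠ t in nhds t₁, HasDerivAt γ₂ (Y (γ₂ t)) t ∧ γ₂ t ∈ sL := by
      have hc : ContinuousAt γ₂ t₁ := (h₂ t₁ hIoo₁).2.continuousAt
      filter_upwards [hc.preimage_mem_nhds (heq₁ ▸ hsL), 
        Ioo_mem_nhds hIoo₁.1 hIoo₁.2] with t hta htb
      exact ⟨(h₂ t htb).2, hta⟩
    have hloc : γ₁ =ᶠ[nhds t₁] γ₂ :=
      ODE_solution_unique_of_eventually (v := fun _ => Y) (s := fun _ => sL)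
        (Filter.Eventually.of_forall fun _ => hLip) hev₁ hev₂ heq₁
    filter_upwards [hloc, Ioo_mem_nhds hIoo₁.1 hIoo₁.2] with t hta htb
    exact ⟨hta, htb⟩

/-- Complete flow for a vector field with a uniform safety-radius control. -/
lemma complete_flow (hU : IsOpen U) (hY : ContDiffOn ℝ 1 Y U) (hC : 0 < C)
    (hd : ∀ x ∈ U, 0 < d x) (hball : ∀ x ∈ U, closedBall x (d x) ⊆ U)
    (hbd : ∀ x ∈ U, ∀ y ∈ closedBall x (d x), ‖Y y‖ ≤ C * d x) :
    ∃ Φ : ℝ → Euc n → Euc n,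
      (∀ p ∈ U, ∀ t : ℝ, Φ t p ∈ U) ∧
      (∀ p ∈ U, Φ 0 p = p) ∧
      (∀ p ∈ U, ∀ t : ℝ, HasDerivAt (fun s => Φ s p) (Y (Φ t p)) t) ∧
      (∀ p ∈ U, ∀ γ : ℝ → Euc n, γ 0 = p → (∀ t, γ t ∈ U) →
        (∀ t, HasDerivAt γ (Y (γ t)) t) → ∀ t, γ t = Φ t p) := by
  classical
  set ε : ℝ := 1/C with hεdef
  have hε : 0 < ε := div_pos one_pos hC
  set A : ℕ → ℝ := fun k => ((k : ℝ) + 1) * ε with hA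
  have hA0 : ∀ k, 0 < A k := fun k => mul_pos (by positivity) hε
  -- global solutions through every point
  have glob : ∀ p ∈ U, ∃ γ : ℝ → Euc n, γ 0 = p ∧
      ∀ t : ℝ, γ t ∈ U ∧ HasDerivAt γ (Y (γ t)) t := by
    intro p hp
    have sols : ∀ k : ℕ, ∃ γ : ℝ → Euc n, γ 0 = p ∧ ∀ t ∈ Icc (-(A k)) (A k),
        γ t ∈ U ∧ HasDerivWithinAt γ (Y (γ t)) (Icc (-(A k)) (A k)) t := by
      intro k
      induction k with
      | zero =>
        obtain ⟨γ, hγ0, hγ⟩ := local_sol hU hY hC hd hball hbd hp 0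
        have e1 : -(A 0) = 0 - 1/C := by simp [hA, hεdef, one_div]
        have e2 : A 0 = 0 + 1/C := by simp [hA, hεdef, one_div]
        rw [e1, e2]
        exact ⟨γ, hγ0, hγ⟩
      | succ k ih =>
        obtain ⟨γ, hγ0, hγ⟩ := ih
        set b : ℝ := A k with hb
        have hbpos : 0 < b := hA0 k
        -- extend to the right
        have hbU : γ b ∈ U := (hγ b ⟨by linarith, le_refl b⟩).1
        obtain ⟨δr, hδr0, hδr⟩ := local_sol hU hY hC hd hball hbd hbU b
        have hδr' : ∀ t ∈ Icc b (b + ε), δr t ∈ U ∧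
            HasDerivWithinAt δr (Y (δr t)) (Icc b (b + ε)) t := by
          intro t ht
          have hsub : Icc b (b + ε) ⊆ Icc (b - 1/C) (b + 1/C) :=
            Icc_subset_Icc (by linarith) (by rw [hεdef])
          exact ⟨(hδr t (hsub ht)).1, (hδr t (hsub ht)).2.mono hsub⟩
        obtain ⟨η₁, hη₁γ, _, hη₁⟩ := glue_sol (by linarith : -b ≤ b)
          (by linarith : b ≤ b + ε) hγ hδr' hδr0.symm
        -- extend to the left
        have hlU : η₁ (-b) ∈ U := (hη₁ (-b) ⟨le_refl _, by linarith⟩).1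
        obtain ⟨δl, hδl0, hδl⟩ := local_sol hU hY hC hd hball hbd hlU (-b)
        have hδl' : ∀ t ∈ Icc (-b - ε) (-b), δl t ∈ U ∧
            HasDerivWithinAt δl (Y (δl t)) (Icc (-b - ε) (-b)) t := by
          intro t ht
          have hsub : Icc (-b - ε) (-b) ⊆ Icc (-b - 1/C) (-b + 1/C) :=
            Icc_subset_Icc (by rw [hεdef]) (by linarith)
          exact ⟨(hδl t (hsub ht)).1, (hδl t (hsub ht)).2.mono hsub⟩
        obtain ⟨η₂, _, hη₂η₁, hη₂⟩ := glue_sol (by linarith : -b - ε ≤ -b)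
          (by linarith : -b ≤ b + ε) hδl' hη₁ (by rw [hδl0])
        have hη₂0 : η₂ 0 = p := by
          rw [hη₂η₁ 0 ⟨by linarith, by linarith⟩, hη₁γ 0 ⟨by linarith, by linarith⟩, hγ0]
        have e1 : -(A (k+1)) = -b - ε := by
          simp only [hA, hb]; push_cast; ring
        have e2 : A (k+1) = b + ε := by
          simp only [hA, hb]; push_cast; ring
        rw [e1, e2]
        exact ⟨η₂, hη₂0, hη₂⟩
    choose Γ hΓ0 hΓ using sols
    have deriv_int : ∀ k, ∀ t ∈ Ioo (-(A k)) (A k),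
        Γ k t ∈ U ∧ HasDerivAt (Γ k) (Y (Γ k t)) t := by
      intro k t ht
      obtain ⟨hmem, hder⟩ := hΓ k t (Ioo_subset_Icc_self ht)
      exact ⟨hmem, hder.hasDerivAt (Icc_mem_nhds ht.1 ht.2)⟩
    have zero_mem : ∀ k, (0:ℝ) ∈ Ioo (-(A k)) (A k) :=
      fun k => ⟨by linarith [hA0 k], hA0 k⟩
    have agree : ∀ k m t, t ∈ Ioo (-(A k)) (A k) → t ∈ Ioo (-(A m)) (A m) →
        Γ k t = Γ m t := by
      intro k m t ht1 ht2
      set r : ℝ := min (A k) (A m) with hr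
      have hrk : r ≤ A k := min_le_left _ _
      have hrm : r ≤ A m := min_le_right _ _
      have hrpos : 0 < r := lt_min (hA0 k) (hA0 m)
      have hsub1 : Ioo (-r) r ⊆ Ioo (-(A k)) (A k) :=
        Ioo_subset_Ioo (by linarith) hrk
      have hsub2 : Ioo (-r) r ⊆ Ioo (-(A m)) (A m) :=
        Ioo_subset_Ioo (by linarith) hrm
      have htr : t ∈ Ioo (-r) r := by
        constructor
        · have h1 : -t < A k := by linarith [ht1.1]
          have h2 : -t < A m := by linarith [ht2.1]
          have := lt_min h1 h2
          linarith
        · exact lt_min ht1.2 ht2.2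
      exact sol_unique hU hY (a := -r) (b := r) ⟨by linarith, hrpos⟩
        (fun s hs => deriv_int k s (hsub1 hs))
        (fun s hs => deriv_int m s (hsub2 hs))
        (by rw [hΓ0 k, hΓ0 m]) htr
    set N : ℝ → ℕ := fun t => ⌊|t| / ε⌋₊ with hN
    have hNt : ∀ t : ℝ, t ∈ Ioo (-(A (N t))) (A (N t)) := by
      intro t
      have h1 : |t| / ε < (N t : ℝ) + 1 := Nat.lt_floor_add_one _
      have h2 : |t| < A (N t) := by
        rw [hA]
        calc |t| = (|t| / ε) * ε := by field_simp
        _ < ((N t : ℝ) + 1) * ε := by exact mul_lt_mul_of_pos_right h1 hε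
      rw [abs_lt] at h2
      exact ⟨by linarith [h2.1], h2.2⟩
    set γg : ℝ → Euc n := fun t => Γ (N t) t with hγg
    have hgg : ∀ k, ∀ t ∈ Ioo (-(A k)) (A k), γg t = Γ k t :=
      fun k t ht => agree (N t) k t (hNt t) ht
    refine ⟨γg, ?_, fun t => ⟨(deriv_int (N t) t (hNt t)).1, ?_⟩⟩
    · exact hΓ0 (N 0)
    · have hev : γg =ᶠ[nhds t] Γ (N t) := by
        filter_upwards [Ioo_mem_nhds (hNt t).1 (hNt t).2] with s hs
        exact hgg (N t) s hs
      have := (deriv_int (N t) t (hNt t)).2.congr_of_eventuallyEq hev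
      simpa [hγg] using this
  -- define the flow
  choose! γsol hγsol0 hγsol using glob
  refine ⟨fun t q => if hq : q ∈ U then γsol q t else q, ?_, ?_, ?_, ?_⟩
  · intro p hp t; simp only [dif_pos hp]; exact (hγsol p hp t).1
  · intro p hp; simp only [dif_pos hp]; exact hγsol0 p hp
  · intro p hp t
    simp only [dif_pos hp]
    exact (hγsol p hp t).2
  · intro p hp γ hγ0 hγU hγd t
    simp only [dif_pos hp]
    have hb : (0:ℝ) < |t| + 1 := by positivity
    refine sol_unique hU hY (a := -(|t|+1)) (b := |t|+1) ⟨by linarith, hb⟩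
      (fun s _ => ⟨hγU s, hγd s⟩)
      (fun s _ => ⟨(hγsol p hp s).1, (hγsol p hp s).2⟩)
      (by rw [hγ0, hγsol0 p hp]) ?_
    have h1 : -(|t|+1) < t := by linarith [neg_abs_le t]
    have h2 : t < |t|+1 := by linarith [le_abs_self t]
    exact ⟨h1, h2⟩

end ODE

/-- A continuous "safety radius" function for an open set. -/
lemma exists_radius {n : ℕ} {U : Set (Euc n)} (hU : IsOpen U) :
    ∃ m : Euc n → ℝ, Continuous m ∧ (∀ x ∈ U, 0 < m x) ∧ (∀ x, m x ≤ 1) ∧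
      (∀ x y : Euc n, m y ≤ m x + dist y x) ∧
      (∀ x ∈ U, closedBall x (m x / 2) ⊆ U) := by
  rcases eq_or_ne Uᶜ ∅ with hc | hc
  · refine ⟨fun _ => 1, continuous_const, fun _ _ => one_pos, fun _ => le_refl _,
      fun x y => by linarith [dist_nonneg (x := y) (y := x)],
      fun x _ _ _ => ?_⟩
    have : U = univ := compl_empty_iff.mp hc
    rw [this]; trivial
  · have hne : Uᶜ.Nonempty := nonempty_iff_ne_empty.mpr hc
    refine ⟨fun x => min 1 (Metric.infDist x Uᶜ), ?_, ?_, ?_, ?_, ?_⟩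
    · exact continuous_const.min (Metric.continuous_infDist_pt _)
    · intro x hx
      have hpos : 0 < Metric.infDist x Uᶜ :=
        (hU.isClosed_compl.notMem_iff_infDist_pos hne).mp (by simpa using hx)
      exact lt_min one_pos hpos
    · exact fun x => min_le_left _ _
    · intro x y
      have h1 : Metric.infDist y Uᶜ ≤ Metric.infDist x Uᶜ + dist y x :=
        Metric.infDist_le_infDist_add_dist
      have h2 : min 1 (Metric.infDist y Uᶜ) ≤ min 1 (Metric.infDist x Uᶜ + dist y x) :=
        min_le_min le_rfl h1
      have h3 : min 1 (Metric.infDist x Uᶜ + dist y x)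
          ≤ min (1 + dist y x) (Metric.infDist x Uᶜ + dist y x) :=
        min_le_min (by linarith [dist_nonneg (x := y) (y := x)]) le_rfl
      calc min 1 (Metric.infDist y Uᶜ) ≤ _ := h2
        _ ≤ _ := h3
        _ = min 1 (Metric.infDist x Uᶜ) + dist y x := by rw [← min_add_add_right]
    · intro x hx y hy
      by_contra hyU
      have hyc : y ∈ Uᶜ := hyU
      have h1 : Metric.infDist x Uᶜ ≤ dist x y := Metric.infDist_le_dist_of_mem hyc
      have h2 : dist y x ≤ min 1 (Metric.infDist x Uᶜ) / 2 := mem_closedBall.mp hy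
      have hpos : 0 < Metric.infDist x Uᶜ :=
        (hU.isClosed_compl.notMem_iff_infDist_pos hne).mp (by simpa using hx)
      have h3 : min 1 (Metric.infDist x Uᶜ) ≤ Metric.infDist x Uᶜ := min_le_right _ _
      have h4 : 0 < min 1 (Metric.infDist x Uᶜ) := lt_min one_pos hpos
      rw [dist_comm] at h1
      linarith

/-- For any compact `K ⊆ U` there is a `C^∞` positive function `f` on `U`,
equal to `1` on `K`, such that the vector field `fX` has a complete flow. -/
theorem exists_smooth_rescaling_complete_flow
    {n : ℕ} (U : Set (Euc n)) (hU : IsOpen U)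
    (X : Euc n → Euc n) (l : ℕ∞) (hl : 1 ≤ l) (hX : ContDiffOn ℝ l X U)
    (K : Set (Euc n)) (hK : IsCompact K) (hKU : K ⊆ U) :
    ∃ f : Euc n → ℝ, ContDiffOn ℝ ((⊤ : ℕ∞) : WithTop ℕ∞) f U ∧ (∀ p ∈ U, 0 < f p) ∧ (∀ p ∈ K, f p = 1) ∧
      ∃ Φ : ℝ → Euc n → Euc n, IsCompleteFlow (fun p => f p • X p) U Φ := by
  classical
  obtain ⟨m, hmc, hmpos, hmle1, hmtri, hmball⟩ := exists_radius hU
  have hXc : ContinuousOn X U := hX.continuousOn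
  have hXn : ContinuousOn (fun x => ‖X x‖) U := hXc.norm
  have hden : ∀ x : Euc n, (0:ℝ) < 1 + ‖X x‖ := fun x => by positivity
  -- bound on K
  obtain ⟨C₀, hC₀⟩ := hK.exists_bound_of_continuousOn
    (((continuousOn_const.mul (continuousOn_const.add (hXn.mono hKU)))).div
      hmc.continuousOn
      (fun x hx => ne_of_gt (hmpos x (hKU hx))) :
      ContinuousOn (fun x => (2 * (1 + ‖X x‖)) / m x) K)
  set C₁ : ℝ := max 1 C₀ with hC₁
  have hC₁1 : (1:ℝ) ≤ C₁ := le_max_left _ _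
  have hC₁0 : (0:ℝ) < C₁ := lt_of_lt_of_le one_pos hC₁1
  set G : Euc n → ℝ := fun x => C₁ * (m x / (1 + ‖X x‖)) with hG
  have hGc : ContinuousOn G U := continuousOn_const.mul
    ((hmc.continuousOn).div (continuousOn_const.add hXn) (fun x hx => ne_of_gt (hden x)))
  have hGpos : ∀ x ∈ U, 0 < G x := fun x hx =>
    mul_pos hC₁0 (div_pos (hmpos x hx) (hden x))
  have hGK : ∀ x ∈ K, 2 ≤ G x := by
    intro x hx
    have h0 := hC₀ x hx
    simp only [Pi.div_apply] at h0
    have h1 : (2 * (1 + ‖X x‖)) / m x ≤ C₁ :=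
      le_trans (le_trans (le_abs_self _) h0) (le_max_right _ _)
    have hm0 : 0 < m x := hmpos x (hKU hx)
    rw [div_le_iff₀ hm0] at h1
    show 2 ≤ C₁ * (m x / (1 + ‖X x‖))
    rw [mul_div_assoc', le_div_iff₀ (hden x)]
    linarith
  obtain ⟨f, hfsm, hfb, hfK⟩ := exists_smooth_minorant hU hGc hGpos hK hKU hGK
  refine ⟨f, hfsm, fun p hp => (hfb p hp).1, hfK, ?_⟩
  -- the rescaled field
  set Y : Euc n → Euc n := fun p => f p • X p with hY
  have hYsm : ContDiffOn ℝ 1 Y U := by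
    refine ContDiffOn.smul (f := f) (g := X) ?_ ?_
    · exact hfsm.of_le (by exact_mod_cast le_top)
    · exact hX.of_le (by exact_mod_cast hl)
  have hYbd : ∀ x ∈ U, ‖Y x‖ ≤ C₁ * m x := by
    intro x hx
    have h1 : ‖Y x‖ = f x * ‖X x‖ := by
      rw [hY, norm_smul, Real.norm_eq_abs, abs_of_pos (hfb x hx).1]
    have h3 : f x * ‖X x‖ ≤ G x * ‖X x‖ :=
      mul_le_mul_of_nonneg_right (hfb x hx).2 (norm_nonneg _)
    have h4 : G x * ‖X x‖ ≤ C₁ * m x := by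
      have h5 : m x / (1 + ‖X x‖) * ‖X x‖ ≤ m x := by
        rw [div_mul_eq_mul_div, div_le_iff₀ (hden x)]
        nlinarith [norm_nonneg (X x), hmpos x hx]
      calc G x * ‖X x‖ = C₁ * (m x / (1 + ‖X x‖) * ‖X x‖) := by rw [hG]; ring
        _ ≤ C₁ * m x := mul_le_mul_of_nonneg_left h5 hC₁0.le
    calc ‖Y x‖ = f x * ‖X x‖ := h1
      _ ≤ G x * ‖X x‖ := h3
      _ ≤ C₁ * m x := h4
  -- complete flow
  have hbd' : ∀ x ∈ U, ∀ y ∈ closedBall x (m x / 2), ‖Y y‖ ≤ (3 * C₁) * (m x / 2) := by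
    intro x hx y hy
    have hyU : y ∈ U := hmball x hx hy
    have hdist : dist y x ≤ m x / 2 := mem_closedBall.mp hy
    have h5 := hYbd y hyU
    have h6 : m y ≤ m x + m x / 2 := le_trans (hmtri x y) (by linarith)
    calc ‖Y y‖ ≤ C₁ * m y := h5
      _ ≤ C₁ * (m x + m x / 2) := mul_le_mul_of_nonneg_left h6 hC₁0.le
      _ = 3 * C₁ * (m x / 2) := by ring
  obtain ⟨Φ, h1, h2, h3, h4⟩ := complete_flow (d := fun x => m x / 2) (C := 3 * C₁)
    hU hYsm (by positivity) (fun x hx => half_pos (hmpos x hx)) hmball hbd'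
  exact ⟨Φ, h1, h2, h3, h4⟩
end
end

section
/- Let χ: ℝ² → [0,∞) be a C^l function (l ∈ ℕ ∪ {∞}) with χ(x,y) = 0 if and only if (x,y) = (0,0), and let X: ℝ² → ℝ², X(x,y) = (χ(x,y), 0), having complete flow Φ. Then: (a) the chain recurrent set of X is R_X = {(0,0)}; and (b) every continuous function τ: ℝ² → ℝ that is strictly decreasing along nonconstant orbits of X (in particular, every complete Lyapunov function for X) satisfies τ(x,0) > τ(0,0) for all x < 0 and τ(x,0) < τ(0,0) for all x > 0, and consequently the level set {p ∈ ℝ² : τ(p) = τ((0,0))} is strictly larger than {(0,0)}. -/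
set_option linter.unusedSectionVars false
set_option linter.unusedVariables false


open Set
open Metric

noncomputable section

/-! ### Generic auxiliary lemmas -/

lemma vec_zero' : (!₂[0, 0] : Euc 2) = 0 := by
  ext i; fin_cases i <;> rfl

lemma abs_coord_le_norm' (v : Euc 2) (i : Fin 2) : |v i| ≤ ‖v‖ := by
  rw [EuclideanSpace.norm_eq]
  rw [show |v i| = Real.sqrt (|v i| ^ 2) by rw [Real.sqrt_sq_eq_abs, abs_abs]]
  apply Real.sqrt_le_sqrt
  have : ‖v i‖ ^ 2 ≤ ∑ j : Fin 2, ‖v j‖ ^ 2 :=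
    Finset.single_le_sum (f := fun j => ‖v j‖ ^ 2) (fun j _ => by positivity) (Finset.mem_univ i)
  simpa using this

lemma norm_eq_abs_coord0' (v : Euc 2) (h : v 1 = 0) : ‖v‖ = |v 0| := by
  rw [EuclideanSpace.norm_eq, Fin.sum_univ_two, h]
  simp [Real.sqrt_sq_eq_abs]

lemma continuous_mk2' (u v : ℝ → ℝ) (hu : Continuous u) (hv : Continuous v) :
    Continuous (fun s => (!₂[u s, v s] : Euc 2)) := by
  have h1 : Continuous fun s : ℝ => (![u s, v s] : Fin 2 → ℝ) := by
    apply continuous_pi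
    intro i
    fin_cases i <;> simpa
  exact (PiLp.continuous_toLp (p := 2) (β := fun _ : Fin 2 => ℝ)).comp h1

lemma sub_le_of_hasDerivAt_ge' {f : ℝ → ℝ} {f' : ℝ → ℝ} {u v m : ℝ} (huv : u ≤ v)
    (hd : ∀ s, HasDerivAt f (f' s) s) (hm : ∀ s ∈ Icc u v, m ≤ f' s) :
    m * (v - u) ≤ f v - f u := by
  have hg : ∀ s, HasDerivAt (fun s => f s - m * s) (f' s - m) s := by
    intro s
    exact ((hd s).sub ((hasDerivAt_id' s).const_mul m)).congr_deriv (by ring)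
  have hmono : MonotoneOn (fun s => f s - m * s) (Icc u v) := by
    apply monotoneOn_of_deriv_nonneg (convex_Icc u v)
    · exact fun s _ => ((hg s).differentiableAt).continuousAt.continuousWithinAt
    · exact fun s _ => ((hg s).differentiableAt).differentiableWithinAt
    · intro s hs
      rw [(hg s).deriv]
      rw [interior_Icc] at hs
      have := hm s (Ioo_subset_Icc_self hs)
      linarith
  have := hmono (left_mem_Icc.2 huv) (right_mem_Icc.2 huv) huv
  simp only at this
  linarith

/-! ### The function ν -/

noncomputable def nu' (χ : Euc 2 → ℝ) (δ : ℝ) (r : Euc 2) : ℝ := sInf (χ '' closedBall r δ)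

section Nu
variable {χ : Euc 2 → ℝ} (hc : Continuous χ) (hnn : ∀ p, 0 ≤ χ p)
  (hz0 : ∀ p, χ p = 0 ↔ p = 0) {δ : ℝ} (hδ : 0 < δ)

include hnn hδ in
lemma nu_nonneg' (r : Euc 2) : 0 ≤ nu' χ δ r := by
  apply le_csInf ((Metric.nonempty_closedBall.2 (le_of_lt hδ)).image χ)
  rintro b ⟨z, _, rfl⟩; exact hnn z

include hnn in
lemma nu_le' (r : Euc 2) {z : Euc 2} (hz : z ∈ closedBall r δ) : nu' χ δ r ≤ χ z :=
  csInf_le ⟨0, by rintro b ⟨w, _, rfl⟩; exact hnn w⟩ ⟨z, hz, rfl⟩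

include hδ in
lemma le_nu' (r : Euc 2) {m : ℝ} (h : ∀ z ∈ closedBall r δ, m ≤ χ z) : m ≤ nu' χ δ r := by
  apply le_csInf ((Metric.nonempty_closedBall.2 (le_of_lt hδ)).image χ)
  rintro b ⟨z, hz, rfl⟩; exact h z hz

include hc hnn hz0 hδ in
lemma nu_pos' {r : Euc 2} (hr : δ < ‖r‖) : 0 < nu' χ δ r := by
  have hcpt : IsCompact (χ '' closedBall r δ) := (isCompact_closedBall r δ).image hc
  have hne : (χ '' closedBall r δ).Nonempty :=
    (Metric.nonempty_closedBall.2 (le_of_lt hδ)).image χ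
  obtain ⟨z, hz, hmin⟩ := hcpt.sInf_mem hne
  rw [nu', ← hmin]
  rcases lt_or_eq_of_le (hnn z) with h | h
  · exact h
  · exfalso
    have hz0' : z = 0 := (hz0 z).1 h.symm
    rw [mem_closedBall, dist_eq_norm, hz0', zero_sub, norm_neg] at hz
    linarith

include hc hnn hδ in
lemma nu_continuous' : Continuous (nu' χ δ) := by
  rw [Metric.continuous_iff]
  intro r₀ e he
  obtain ⟨d, hd, hub⟩ := Metric.uniformContinuousOn_iff.1
    ((isCompact_closedBall r₀ (δ + 1)).uniformContinuousOn_of_continuous hc.continuousOn)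
    (e/2) (by linarith)
  refine ⟨min d 1, by positivity, fun r hr => ?_⟩
  have hrd : dist r r₀ < d := lt_of_lt_of_le hr (min_le_left _ _)
  have hr1 : dist r r₀ < 1 := lt_of_lt_of_le hr (min_le_right _ _)
  have main : ∀ r1 r2 : Euc 2, dist r1 r₀ ≤ 1 → dist r2 r₀ ≤ 1 → dist r1 r2 < d →
      nu' χ δ r2 ≤ nu' χ δ r1 + e/2 := by
    intro r1 r2 h1 h2 h12
    have : ∀ z ∈ closedBall r1 δ, nu' χ δ r2 - e/2 ≤ χ z := by
      intro z hz
      set z' := z + (r2 - r1) with hz'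
      have hz'mem : z' ∈ closedBall r2 δ := by
        rw [mem_closedBall, dist_eq_norm, show z' - r2 = z - r1 by rw [hz']; abel,
          ← dist_eq_norm]
        exact hz
      have hzK : z ∈ closedBall r₀ (δ + 1) := by
        rw [mem_closedBall] at hz ⊢
        calc dist z r₀ ≤ dist z r1 + dist r1 r₀ := dist_triangle _ _ _
          _ ≤ δ + 1 := add_le_add hz h1
      have hz'K : z' ∈ closedBall r₀ (δ + 1) := by
        rw [mem_closedBall] at hz'mem ⊢
        calc dist z' r₀ ≤ dist z' r2 + dist r2 r₀ := dist_triangle _ _ _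
          _ ≤ δ + 1 := add_le_add hz'mem h2
      have hdzz' : dist z z' < d := by
        rw [hz', dist_eq_norm]
        simpa [dist_eq_norm, norm_sub_rev] using h12
      have := hub z hzK z' hz'K hdzz'
      have h3 : |χ z - χ z'| < e/2 := by rwa [Real.dist_eq] at this
      have h4 := nu_le' hnn (δ := δ) r2 hz'mem
      have := abs_lt.1 h3
      linarith
    linarith [le_nu' hδ (χ := χ) r1 this]
  have d1 : dist r r₀ ≤ 1 := le_of_lt hr1
  have hA := main r r₀ d1 (by simp) (by rwa [dist_comm] at hrd ⊢)
  have hB := main r₀ r (by simp) d1 (by rwa [dist_comm])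
  rw [Real.dist_eq, abs_lt]
  constructor <;> linarith

end Nu

/-! ### Flow basics -/

section Basics

variable {χ : Euc 2 → ℝ} {X : Euc 2 → Euc 2} {Φ : ℝ → Euc 2 → Euc 2}
variable (hχnonneg : ∀ p, 0 ≤ χ p) (hχzero : ∀ p, χ p = 0 ↔ p = 0)
variable (hX : ∀ p, X p = (!₂[χ p, 0] : Euc 2)) (hΦ : IsCompleteFlow X univ Φ)

include hχzero hX in
lemma X_zero' : X 0 = 0 := by
  rw [hX, (hχzero 0).mpr rfl, vec_zero']

include hχzero hX hΦ in
lemma flow_fixed_zero' (t : ℝ) : Φ t 0 = 0 := by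
  have := hΦ.2.2.2 0 (mem_univ _) (fun _ => 0) rfl (fun _ => mem_univ _)
    (fun t => by simpa [X_zero' hχzero hX] using hasDerivAt_const t (0 : Euc 2))
  exact (this t).symm

include hΦ in
lemma flow_group' (q : Euc 2) (u s : ℝ) : Φ (s + u) q = Φ s (Φ u q) := by
  have h : ∀ s : ℝ, HasDerivAt (fun w : ℝ => Φ (w + u) q) (X (Φ (s + u) q)) s := by
    intro s
    have h1 := hΦ.2.2.1 q (mem_univ _) (s + u)
    have h2 : HasDerivAt (fun w : ℝ => w + u) 1 s := (hasDerivAt_id s).add_const u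
    have := h1.scomp s h2
    simpa [Function.comp_def] using this
  exact hΦ.2.2.2 (Φ u q) (mem_univ _) (fun w => Φ (w + u) q) (by simp)
    (fun _ => mem_univ _) (fun s => h s) s

include hχzero hX hΦ in
lemma flow_ne_zero' {q : Euc 2} (hq : q ≠ 0) (t : ℝ) : Φ t q ≠ 0 := by
  intro h
  apply hq
  have : Φ (-t + t) q = Φ (-t) (Φ t q) := flow_group' hΦ q t (-t)
  rw [h, flow_fixed_zero' hχzero hX hΦ] at this
  simpa [hΦ.2.1 q (mem_univ _)] using this

include hX hΦ in
lemma coord0_hasDerivAt' (q : Euc 2) (t : ℝ) :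
    HasDerivAt (fun s => (Φ s q) 0) (χ (Φ t q)) t := by
  have h1 := hΦ.2.2.1 q (mem_univ _) t
  have h2 := (EuclideanSpace.proj (0 : Fin 2)).hasFDerivAt.comp_hasDerivAt t h1
  simpa [hX, Function.comp_def] using h2

include hX hΦ in
lemma coord1_const' (q : Euc 2) (t : ℝ) : (Φ t q) 1 = q 1 := by
  have hd : ∀ s : ℝ, HasDerivAt (fun s => (Φ s q) 1) 0 s := by
    intro s
    have h1 := hΦ.2.2.1 q (mem_univ _) s
    have h2 := (EuclideanSpace.proj (1 : Fin 2)).hasFDerivAt.comp_hasDerivAt s h1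
    simpa [hX, Function.comp_def] using h2
  have := is_const_of_deriv_eq_zero (f := fun s => (Φ s q) 1)
    (fun s => (hd s).differentiableAt) (fun s => (hd s).deriv) t 0
  simpa [hΦ.2.1 q (mem_univ _)] using this

include hχnonneg hX hΦ in
lemma coord0_mono' (q : Euc 2) : Monotone (fun s => (Φ s q) 0) := by
  apply monotone_of_deriv_nonneg
  · exact fun s => (coord0_hasDerivAt' hX hΦ q s).differentiableAt
  · intro s
    rw [(coord0_hasDerivAt' hX hΦ q s).deriv]
    exact hχnonneg _

include hχnonneg hχzero hX hΦ in
lemma coord0_strict' {q : Euc 2} (hq : q ≠ 0) {t : ℝ} (ht : 0 < t) :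
    q 0 < (Φ t q) 0 := by
  set f : ℝ → ℝ := fun s => (Φ s q) 0 with hf
  have hmono : Monotone f := coord0_mono' hχnonneg hX hΦ q
  have h0 : f 0 = q 0 := by simp [hf, hΦ.2.1 q (mem_univ _)]
  by_contra hle
  push_neg at hle
  have hft : f t ≤ f 0 := by rw [h0]; exact hle
  have heq : ∀ s ∈ Icc (0:ℝ) t, f s = f 0 :=
    fun s hs => le_antisymm (le_trans (hmono hs.2) hft) (hmono hs.1)
  have hmem : Ioo (0:ℝ) t ∈ nhds (t/2) := (isOpen_Ioo).mem_nhds (by constructor <;> linarith)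
  have hev : f =ᶠ[nhds (t/2)] fun _ => f 0 := by
    filter_upwards [hmem] with s hs
    exact heq s (Ioo_subset_Icc_self hs)
  have h2 : HasDerivAt f 0 (t/2) := (hasDerivAt_const (t/2) (f 0)).congr_of_eventuallyEq hev
  have h3 : χ (Φ (t/2) q) = 0 := (coord0_hasDerivAt' hX hΦ q (t/2)).unique h2
  exact flow_ne_zero' hχzero hX hΦ hq (t/2) ((hχzero _).1 h3)

include hχnonneg hX hΦ in
lemma flow_gain' (q : Euc 2) {t : ℝ} (ht : 1 ≤ t) {δ : ℝ} (hδ : 0 < δ) :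
    q 0 + min δ (nu' χ δ (Φ t q)) ≤ (Φ t q) 0 := by
  set f : ℝ → ℝ := fun s => (Φ s q) 0 with hf
  set r := Φ t q with hr
  have hmono : Monotone f := coord0_mono' hχnonneg hX hΦ q
  have h0le : f 0 ≤ f (t-1) := hmono (by linarith)
  have hq0 : q 0 = f 0 := by simp [hf, hΦ.2.1 q (mem_univ _)]
  rcases le_or_gt δ (f t - f (t-1)) with h | h
  · have h1 : min δ (nu' χ δ r) ≤ δ := min_le_left _ _
    have : q 0 + min δ (nu' χ δ r) ≤ f 0 + δ := by rw [hq0]; linarith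
    linarith
  · have hball : ∀ s ∈ Icc (t-1) t, Φ s q ∈ closedBall r δ := by
      intro s hs
      rw [mem_closedBall, dist_eq_norm, norm_eq_abs_coord0']
      · have h1 : f s ≤ f t := hmono hs.2
        have h2 : f (t-1) ≤ f s := hmono hs.1
        have h3 : (Φ s q - r) 0 = f s - f t := by simp [hf, hr]
        rw [h3, abs_le]
        constructor <;> linarith
      · simp [hr, coord1_const' hX hΦ q s, coord1_const' hX hΦ q t]
    have hlow : nu' χ δ r * (t - (t-1)) ≤ f t - f (t-1) := by
      apply sub_le_of_hasDerivAt_ge' (by linarith) (fun s => coord0_hasDerivAt' hX hΦ q s)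
      intro s hs
      exact nu_le' hχnonneg r (hball s hs)
    have hmin : min δ (nu' χ δ r) ≤ nu' χ δ r := min_le_right _ _
    rw [hq0]
    have ht1 : t - (t - 1) = 1 := by ring
    rw [ht1, mul_one] at hlow
    linarith

end Basics

section PartA
variable {χ : Euc 2 → ℝ} {X : Euc 2 → Euc 2} {Φ : ℝ → Euc 2 → Euc 2}
variable (hχc : Continuous χ) (hχnonneg : ∀ p, 0 ≤ χ p) (hχzero : ∀ p, χ p = 0 ↔ p = 0)
variable (hX : ∀ p, X p = (!₂[χ p, 0] : Euc 2)) (hΦ : IsCompleteFlow X univ Φ)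

include hχc hχnonneg hχzero hX hΦ in
lemma chainRec_eq_singleton' : chainRecurrentSet Φ univ = {0} := by
  ext p
  simp only [mem_singleton_iff]
  constructor
  · rintro ⟨-, hrec⟩
    by_contra hp
    -- setup of constants
    set a := p 0 with ha
    set b := (Φ 1 p) 0 with hb
    have hab : a < b := coord0_strict' hχnonneg hχzero hX hΦ hp one_pos
    obtain ⟨c, hac, hcb, hc0⟩ : ∃ c : ℝ, a < c ∧ c < b ∧ c ≠ 0 := by
      by_cases h : (a + b)/2 = 0
      · have hb' : b = -a := by linarith
        have ha' : a < 0 := by nlinarith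
        exact ⟨a/2, by linarith, by linarith, by intro h'; rw [div_eq_zero_iff] at h'; rcases h' with h'|h' <;> linarith⟩
      · exact ⟨(a + b)/2, by linarith, by linarith, h⟩
    set δ := |c|/2 with hδdef
    have hδ : 0 < δ := by
      rw [hδdef]
      have := abs_pos.2 hc0
      linarith
    set ε : Euc 2 → ℝ :=
      fun r => (1/2) * min (b - c) (max (min δ (nu' χ δ r)) |r 0 - c|) with hε
    have hcoord : Continuous fun r : Euc 2 => r 0 :=
      (EuclideanSpace.proj (0 : Fin 2)).continuous
    have hεcont : Continuous ε := by
      apply continuous_const.mul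
      exact (continuous_const.min (((continuous_const.min
        (nu_continuous' hχc hχnonneg hδ)).max ((hcoord.sub continuous_const).abs))))
    have hεpos : ∀ x : Euc 2, 0 < ε x := by
      intro x
      rw [hε]
      have hbc : 0 < b - c := by linarith
      have hmax : 0 < max (min δ (nu' χ δ x)) |x 0 - c| := by
        rcases eq_or_ne (x 0) c with h | h
        · have hnorm : δ < ‖x‖ := by
            have h1 : |x 0| ≤ ‖x‖ := abs_coord_le_norm' x 0
            rw [h] at h1
            rw [hδdef]
            have := abs_pos.2 hc0
            linarith
          have := nu_pos' hχc hχnonneg hχzero hδ hnorm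
          exact lt_max_of_lt_left (lt_min hδ this)
        · exact lt_max_of_lt_right (abs_pos.2 (sub_ne_zero.2 h))
      positivity
    obtain ⟨m, q, ⟨hm1, -, ts, hts⟩, hq0, hqm⟩ :=
      hrec 1 one_pos ε hεcont.continuousOn (fun x _ => hεpos x)
    -- basic estimates for one chain step
    have hstep : ∀ i < m, (Φ (ts i) (q i)) 0 - ε (Φ (ts i) (q i)) ≤ q (i+1) 0 := by
      intro i hi
      obtain ⟨hT, hjump⟩ := hts i hi
      set r := Φ (ts i) (q i) with hr
      have h1 : |(r - q (i+1)) 0| ≤ ‖r - q (i+1)‖ := abs_coord_le_norm' _ 0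
      have h2 : (r - q (i+1)) 0 = r 0 - q (i+1) 0 := by simp
      rw [h2] at h1
      have := le_trans h1 hjump
      have := abs_le.1 this
      linarith [this.2]
    -- the invariant
    have inv : ∀ i, i < m → (i = 0 ∨ c < q i 0) → c < q (i+1) 0 := by
      intro i hi hcase
      obtain ⟨hT, hjump⟩ := hts i hi
      set r := Φ (ts i) (q i) with hr
      have hjmp := hstep i hi
      rcases hcase with h0 | hqi
      · -- base case: q i = p
        subst h0
        have hrb : b ≤ r 0 := by
          have hmono := coord0_mono' hχnonneg hX hΦ p
          have h2 := hmono hT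
          rw [hr, hq0]
          simpa using h2
        have hεle : ε r ≤ (b - c)/2 := by
          have h2 : ε r = 1/2 * min (b - c) (max (min δ (nu' χ δ r)) |r 0 - c|) := rfl
          rw [h2]
          have := min_le_left (b - c) (max (min δ (nu' χ δ r)) |r 0 - c|)
          linarith
        linarith
      · -- inductive case
        have hgain := flow_gain' hχnonneg hX hΦ (q i) hT hδ
        rw [← hr] at hgain
        have hA : (0:ℝ) ≤ min δ (nu' χ δ r) :=
          le_min (le_of_lt hδ) (nu_nonneg' hχnonneg hδ r)
        have hrc : min δ (nu' χ δ r) < r 0 - c := by linarith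
        have habs : |r 0 - c| = r 0 - c := abs_of_pos (by linarith)
        have hεle : ε r ≤ (r 0 - c)/2 := by
          have h1 : max (min δ (nu' χ δ r)) |r 0 - c| = r 0 - c := by
            rw [habs]
            exact max_eq_right (le_of_lt hrc)
          have h2 : ε r = 1/2 * min (b - c) (max (min δ (nu' χ δ r)) |r 0 - c|) := rfl
          rw [h2, h1]
          have := min_le_right (b - c) (r 0 - c)
          linarith
        linarith
    have all : ∀ i, i + 1 ≤ m → c < q (i+1) 0 := by
      intro i
      induction i with
      | zero => exact fun h => inv 0 h (Or.inl rfl)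
      | succ n ih =>
        intro h
        exact inv (n+1) h (Or.inr (ih (by omega)))
    have hlast := all (m - 1) (by omega)
    rw [show m - 1 + 1 = m by omega, hqm] at hlast
    rw [← ha] at hlast
    linarith
  · rintro rfl
    refine ⟨mem_univ _, fun T hT ε hεc hεp => ⟨1, fun _ => 0, ⟨le_refl 1, fun _ _ => mem_univ _,
      fun _ => T, fun i _ => ⟨le_refl T, ?_⟩⟩, rfl, rfl⟩⟩
    rw [flow_fixed_zero' hχzero hX hΦ]
    simpa using le_of_lt (hεp 0 (mem_univ _))

end PartA

section PartB
variable {χ : Euc 2 → ℝ} {X : Euc 2 → Euc 2} {Φ : ℝ → Euc 2 → Euc 2}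
variable (hχc : Continuous χ) (hχnonneg : ∀ p, 0 ≤ χ p) (hχzero : ∀ p, χ p = 0 ↔ p = 0)
variable (hX : ∀ p, X p = (!₂[χ p, 0] : Euc 2)) (hΦ : IsCompleteFlow X univ Φ)

lemma mk2_c0 (u v : ℝ) : (!₂[u, v] : Euc 2) 0 = u := rfl
lemma mk2_c1 (u v : ℝ) : (!₂[u, v] : Euc 2) 1 = v := rfl
lemma euc_zero_c (i : Fin 2) : (0 : Euc 2) i = 0 := rfl

lemma ne_zero_of_coord0 (q : Euc 2) (h : q 0 ≠ 0) : q ≠ 0 :=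
  fun hq => h (by rw [hq]; rfl)

include hX hΦ in
lemma flow_eq_mk (q : Euc 2) (hq1 : q 1 = 0) (t : ℝ) :
    Φ t q = (!₂[(Φ t q) 0, 0] : Euc 2) := by
  ext i
  fin_cases i
  · rfl
  · show (Φ t q) 1 = _
    rw [coord1_const' hX hΦ q t, hq1]; rfl

include hχnonneg hχzero hX hΦ in
lemma flow_continuous_coord0 (q : Euc 2) : Continuous (fun t => (Φ t q) 0) :=
  continuous_iff_continuousAt.2 fun t =>
    (coord0_hasDerivAt' hX hΦ q t).differentiableAt.continuousAt

include hχnonneg hχzero hX hΦ in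
lemma coord_neg (q : Euc 2) (hq1 : q 1 = 0) (hq0 : q 0 < 0) (t : ℝ) : (Φ t q) 0 < 0 := by
  set f : ℝ → ℝ := fun s => (Φ s q) 0 with hf
  have hqne : q ≠ 0 := ne_zero_of_coord0 q (ne_of_lt hq0)
  have hne : ∀ s : ℝ, f s ≠ 0 := by
    intro s h
    apply flow_ne_zero' hχzero hX hΦ hqne s
    rw [flow_eq_mk hX hΦ q hq1 s]
    show (!₂[f s, 0] : Euc 2) = 0
    rw [h, vec_zero']
  have hmono : Monotone f := coord0_mono' hχnonneg hX hΦ q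
  have h0 : f 0 = q 0 := by simp [hf, hΦ.2.1 q (mem_univ _)]
  by_contra hge
  push_neg at hge
  have hgt : 0 < f t := lt_of_le_of_ne hge (Ne.symm (hne t))
  have ht0 : 0 < t := by
    by_contra h
    push_neg at h
    have := hmono h
    rw [h0] at this
    linarith
  have : (0:ℝ) ∈ Icc (f 0) (f t) := ⟨by rw [h0]; linarith, le_of_lt hgt⟩
  obtain ⟨s, -, hs⟩ := intermediate_value_Icc (le_of_lt ht0)
    (flow_continuous_coord0 hχnonneg hχzero hX hΦ q).continuousOn this
  exact hne s hs

include hχnonneg hχzero hX hΦ in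
lemma coord_pos (q : Euc 2) (hq1 : q 1 = 0) (hq0 : 0 < q 0) (t : ℝ) : 0 < (Φ t q) 0 := by
  set f : ℝ → ℝ := fun s => (Φ s q) 0 with hf
  have hqne : q ≠ 0 := ne_zero_of_coord0 q (ne_of_gt hq0)
  have hne : ∀ s : ℝ, f s ≠ 0 := by
    intro s h
    apply flow_ne_zero' hχzero hX hΦ hqne s
    rw [flow_eq_mk hX hΦ q hq1 s]
    show (!₂[f s, 0] : Euc 2) = 0
    rw [h, vec_zero']
  have hmono : Monotone f := coord0_mono' hχnonneg hX hΦ q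
  have h0 : f 0 = q 0 := by simp [hf, hΦ.2.1 q (mem_univ _)]
  by_contra hge
  push_neg at hge
  have hlt : f t < 0 := lt_of_le_of_ne hge (hne t)
  have ht0 : t < 0 := by
    by_contra h
    push_neg at h
    have := hmono h
    rw [h0] at this
    linarith
  have : (0:ℝ) ∈ Icc (f t) (f 0) := ⟨le_of_lt hlt, by rw [h0]; linarith⟩
  obtain ⟨s, -, hs⟩ := intermediate_value_Icc (le_of_lt ht0)
    (flow_continuous_coord0 hχnonneg hχzero hX hΦ q).continuousOn this
  exact hne s hs

include hχc hχnonneg hχzero hX hΦ in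
lemma tendsto_flow_neg (q : Euc 2) (hq1 : q 1 = 0) (hq0 : q 0 < 0) :
    Filter.Tendsto (fun t => Φ t q) Filter.atTop (nhds 0) := by
  set f : ℝ → ℝ := fun s => (Φ s q) 0 with hf
  have hneg : ∀ t, f t < 0 := coord_neg hχnonneg hχzero hX hΦ q hq1 hq0
  have hmono : Monotone f := coord0_mono' hχnonneg hX hΦ q
  have h0 : f 0 = q 0 := by simp [hf, hΦ.2.1 q (mem_univ _)]
  have hbdd : BddAbove (range f) := ⟨0, by rintro y ⟨t, rfl⟩; exact (hneg t).le⟩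
  set L := ⨆ t, f t with hLdef
  have hten : Filter.Tendsto f Filter.atTop (nhds L) := tendsto_atTop_ciSup hmono hbdd
  have hfL : ∀ t, f t ≤ L := fun t => le_ciSup hbdd t
  have hL0 : L ≤ 0 := ciSup_le fun t => (hneg t).le
  set g : ℝ → Euc 2 := fun x => !₂[x, 0] with hg
  have hgc : Continuous g := continuous_mk2' _ _ continuous_id continuous_const
  have hL : L = 0 := by
    by_contra hL
    have hLlt : L < 0 := lt_of_le_of_ne hL0 hL
    set S := g '' Icc (f 0) L with hS
    have hScpt : IsCompact S := isCompact_Icc.image hgc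
    have hf0L : f 0 ≤ L := hfL 0
    have hSne : S.Nonempty := ⟨g (f 0), mem_image_of_mem _ (left_mem_Icc.2 hf0L)⟩
    set μ := sInf (χ '' S) with hμ
    obtain ⟨z, hzS, hzmin⟩ := (hScpt.image hχc).sInf_mem (hSne.image χ)
    have hμpos : 0 < μ := by
      rw [hμ, ← hzmin]
      rcases lt_or_eq_of_le (hχnonneg z) with h | h
      · exact h
      · exfalso
        obtain ⟨x, hx, rfl⟩ := hzS
        have hz0 : g x = 0 := (hχzero _).1 h.symm
        have : x = 0 := by
          have := congrArg (fun v : Euc 2 => v 0) hz0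
          simpa [hg] using this
        rw [this] at hx
        exact absurd hx.2 (by linarith)
    have hμle : ∀ t : ℝ, t ∈ Icc (0:ℝ) ((L - f 0)/μ + 1) → μ ≤ χ (Φ t q) := by
      intro t ht
      have hmem : Φ t q ∈ S := by
        rw [flow_eq_mk hX hΦ q hq1 t]
        exact mem_image_of_mem g ⟨hmono ht.1, hfL t⟩
      exact csInf_le ⟨0, by rintro y ⟨w, -, rfl⟩; exact hχnonneg w⟩ (mem_image_of_mem χ hmem)
    set t0 := (L - f 0)/μ + 1 with ht0
    have ht0pos : 0 < t0 := by
      rw [ht0]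
      have : 0 ≤ (L - f 0)/μ := div_nonneg (by linarith) (le_of_lt hμpos)
      linarith
    have hgrow := sub_le_of_hasDerivAt_ge' (le_of_lt ht0pos)
      (fun s => coord0_hasDerivAt' hX hΦ q s) hμle
    have ht0eq : μ * (t0 - 0) = (L - f 0) + μ := by
      rw [ht0]
      field_simp
      ring
    rw [ht0eq] at hgrow
    have := hfL t0
    linarith
  rw [hL] at hten
  have hfun : (fun t => Φ t q) = fun t => g (f t) :=
    funext fun t => flow_eq_mk hX hΦ q hq1 t
  rw [hfun]
  have := (hgc.tendsto 0).comp hten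
  rwa [show g 0 = 0 from vec_zero'] at this

include hχc hχnonneg hχzero hX hΦ in
lemma tendsto_flow_pos (q : Euc 2) (hq1 : q 1 = 0) (hq0 : 0 < q 0) :
    Filter.Tendsto (fun t => Φ t q) Filter.atBot (nhds 0) := by
  set f : ℝ → ℝ := fun s => (Φ s q) 0 with hf
  have hpos : ∀ t, 0 < f t := coord_pos hχnonneg hχzero hX hΦ q hq1 hq0
  have hmono : Monotone f := coord0_mono' hχnonneg hX hΦ q
  have h0 : f 0 = q 0 := by simp [hf, hΦ.2.1 q (mem_univ _)]
  have hbdd : BddBelow (range f) := ⟨0, by rintro y ⟨t, rfl⟩; exact (hpos t).le⟩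
  set L := ⨅ t, f t with hLdef
  have hten : Filter.Tendsto f Filter.atBot (nhds L) := tendsto_atBot_ciInf hmono hbdd
  have hfL : ∀ t, L ≤ f t := fun t => ciInf_le hbdd t
  have hL0 : 0 ≤ L := le_ciInf fun t => (hpos t).le
  set g : ℝ → Euc 2 := fun x => !₂[x, 0] with hg
  have hgc : Continuous g := continuous_mk2' _ _ continuous_id continuous_const
  have hL : L = 0 := by
    by_contra hL
    have hLgt : 0 < L := lt_of_le_of_ne hL0 (Ne.symm hL)
    set S := g '' Icc L (f 0) with hS
    have hScpt : IsCompact S := isCompact_Icc.image hgc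
    have hf0L : L ≤ f 0 := hfL 0
    have hSne : S.Nonempty := ⟨g L, mem_image_of_mem _ (left_mem_Icc.2 hf0L)⟩
    set μ := sInf (χ '' S) with hμ
    obtain ⟨z, hzS, hzmin⟩ := (hScpt.image hχc).sInf_mem (hSne.image χ)
    have hμpos : 0 < μ := by
      rw [hμ, ← hzmin]
      rcases lt_or_eq_of_le (hχnonneg z) with h | h
      · exact h
      · exfalso
        obtain ⟨x, hx, rfl⟩ := hzS
        have hz0 : g x = 0 := (hχzero _).1 h.symm
        have : x = 0 := by
          have := congrArg (fun v : Euc 2 => v 0) hz0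
          simpa [hg] using this
        rw [this] at hx
        exact absurd hx.1 (by linarith)
    set t0 := -((f 0 - L)/μ + 1) with ht0
    have ht0neg : t0 < 0 := by
      rw [ht0]
      have : 0 ≤ (f 0 - L)/μ := div_nonneg (by linarith) (le_of_lt hμpos)
      linarith
    have hμle : ∀ t : ℝ, t ∈ Icc t0 (0:ℝ) → μ ≤ χ (Φ t q) := by
      intro t ht
      have hmem : Φ t q ∈ S := by
        rw [flow_eq_mk hX hΦ q hq1 t]
        exact mem_image_of_mem g ⟨hfL t, hmono ht.2⟩
      exact csInf_le ⟨0, by rintro y ⟨w, -, rfl⟩; exact hχnonneg w⟩ (mem_image_of_mem χ hmem)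
    have hgrow := sub_le_of_hasDerivAt_ge' (le_of_lt ht0neg)
      (fun s => coord0_hasDerivAt' hX hΦ q s) hμle
    have ht0eq : μ * (0 - t0) = (f 0 - L) + μ := by
      rw [ht0]
      field_simp
      ring
    rw [ht0eq] at hgrow
    have := hfL t0
    linarith
  rw [hL] at hten
  have hfun : (fun t => Φ t q) = fun t => g (f t) :=
    funext fun t => flow_eq_mk hX hΦ q hq1 t
  rw [hfun]
  have := (hgc.tendsto 0).comp hten
  rwa [show g 0 = 0 from vec_zero'] at this

include hχzero hX in
lemma X_ne_zero' {v : Euc 2} (hv : v ≠ 0) : X v ≠ 0 := by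
  intro h
  apply hv
  rw [hX] at h
  have := congrArg (fun v : Euc 2 => v 0) h
  simp only [euc_zero_c] at this
  change χ v = 0 at this
  exact (hχzero v).1 this

section Tau
variable (τ : Euc 2 → ℝ) (hτc : Continuous τ)
  (hdec : ∀ p : Euc 2, X p ≠ 0 → ∀ t > (0:ℝ), τ (Φ t p) < τ p)

include hχc hχnonneg hχzero hX hΦ hτc hdec in
lemma neg_axis (q : Euc 2) (hq1 : q 1 = 0) (hq0 : q 0 < 0) : τ 0 < τ q := by
  have hqne : q ≠ 0 := ne_zero_of_coord0 q (ne_of_lt hq0)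
  have hlim : Filter.Tendsto (fun t => τ (Φ t q)) Filter.atTop (nhds (τ 0)) :=
    (hτc.tendsto 0).comp (tendsto_flow_neg hχc hχnonneg hχzero hX hΦ q hq1 hq0)
  have hev : ∀ᶠ t in Filter.atTop, τ (Φ t q) ≤ τ (Φ 1 q) := by
    filter_upwards [Filter.eventually_ge_atTop (2:ℝ)] with t ht
    have hgrp : Φ t q = Φ (t-1) (Φ 1 q) := by
      have := flow_group' hΦ q 1 (t-1)
      rwa [show t - 1 + 1 = t by ring] at this
    rw [hgrp]
    exact le_of_lt (hdec (Φ 1 q)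
      (X_ne_zero' hχzero hX (flow_ne_zero' hχzero hX hΦ hqne 1)) (t-1) (by linarith))
  have h1 : τ 0 ≤ τ (Φ 1 q) := le_of_tendsto hlim hev
  have h2 : τ (Φ 1 q) < τ q := hdec q (X_ne_zero' hχzero hX hqne) 1 one_pos
  linarith

include hχc hχnonneg hχzero hX hΦ hτc hdec in
lemma pos_axis_le (q : Euc 2) (hq1 : q 1 = 0) (hq0 : 0 < q 0) : τ q ≤ τ 0 := by
  have hqne : q ≠ 0 := ne_zero_of_coord0 q (ne_of_gt hq0)
  have hlim : Filter.Tendsto (fun t => τ (Φ t q)) Filter.atBot (nhds (τ 0)) :=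
    (hτc.tendsto 0).comp (tendsto_flow_pos hχc hχnonneg hχzero hX hΦ q hq1 hq0)
  have hev : ∀ᶠ t in Filter.atBot, τ q ≤ τ (Φ t q) := by
    filter_upwards [Filter.eventually_le_atBot (-1:ℝ)] with t ht
    have hgrp : Φ (-t) (Φ t q) = q := by
      have := flow_group' hΦ q t (-t)
      rw [show -t + t = 0 by ring, hΦ.2.1 q (mem_univ _)] at this
      exact this.symm
    have := hdec (Φ t q)
      (X_ne_zero' hχzero hX (flow_ne_zero' hχzero hX hΦ hqne t)) (-t) (by linarith)
    rw [hgrp] at this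
    exact le_of_lt this
  exact ge_of_tendsto hlim hev

include hχc hχnonneg hχzero hX hΦ hτc hdec in
lemma pos_axis (q : Euc 2) (hq1 : q 1 = 0) (hq0 : 0 < q 0) : τ q < τ 0 := by
  have hqne : q ≠ 0 := ne_zero_of_coord0 q (ne_of_gt hq0)
  set q' := Φ (-1) q with hq'
  have hq'1 : q' 1 = 0 := by rw [hq', coord1_const' hX hΦ q (-1), hq1]
  have hq'0 : 0 < q' 0 := coord_pos hχnonneg hχzero hX hΦ q hq1 hq0 (-1)
  have h1 : τ q' ≤ τ 0 := pos_axis_le hχc hχnonneg hχzero hX hΦ τ hτc hdec q' hq'1 hq'0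
  have hgrp : Φ 1 q' = q := by
    rw [hq']
    have := flow_group' hΦ q (-1) 1
    rw [show (1:ℝ) + -1 = 0 by ring, hΦ.2.1 q (mem_univ _)] at this
    exact this.symm
  have h2 : τ q < τ q' := by
    have := hdec q' (X_ne_zero' hχzero hX (flow_ne_zero' hχzero hX hΦ hqne (-1))) 1 one_pos
    rwa [hgrp] at this
  linarith

end Tau
end PartB

/-- For `X(x,y) = (χ(x,y), 0)` with `χ ≥ 0` vanishing exactly at the origin,
the chain recurrent set is `{(0,0)}`, and every continuous function strictly decreasing along
nonconstant orbits has `τ(x,0) > τ(0,0)` for `x < 0`, `τ(x,0) < τ(0,0)` for `x > 0`, and its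
level set through the origin strictly contains `{(0,0)}`. -/
theorem chainRecurrentSet_eq_singleton_and_level_set_large
    (l : ℕ∞) (hl : 1 ≤ l) (χ : Euc 2 → ℝ) (hχ : ContDiff ℝ l χ)
    (hχnonneg : ∀ p, 0 ≤ χ p) (hχzero : ∀ p, χ p = 0 ↔ p = 0)
    (X : Euc 2 → Euc 2) (hX : ∀ p, X p = (!₂[χ p, 0] : Euc 2))
    (Φ : ℝ → Euc 2 → Euc 2) (hΦ : IsCompleteFlow X univ Φ) :
    chainRecurrentSet Φ univ = {0} ∧
    ∀ τ : Euc 2 → ℝ, Continuous τ →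
      (∀ p : Euc 2, X p ≠ 0 → ∀ t > (0:ℝ), τ (Φ t p) < τ p) →
      (∀ x < (0:ℝ), τ 0 < τ (!₂[x, 0] : Euc 2)) ∧
      (∀ x > (0:ℝ), τ (!₂[x, 0] : Euc 2) < τ 0) ∧
      ({0} : Set (Euc 2)) ⊂ {p | τ p = τ 0} := by
  have hχc : Continuous χ := hχ.continuous
  constructor
  · exact chainRec_eq_singleton' hχc hχnonneg hχzero hX hΦ
  · intro τ hτc hdec
    have hneg : ∀ x < (0:ℝ), τ 0 < τ (!₂[x, 0] : Euc 2) := by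
      intro x hx
      exact neg_axis hχc hχnonneg hχzero hX hΦ τ hτc hdec (!₂[x,0] : Euc 2)
        (mk2_c1 x 0) (by rw [mk2_c0]; exact hx)
    have hpos : ∀ x > (0:ℝ), τ (!₂[x, 0] : Euc 2) < τ 0 := by
      intro x hx
      exact pos_axis hχc hχnonneg hχzero hX hΦ τ hτc hdec (!₂[x,0] : Euc 2)
        (mk2_c1 x 0) (by rw [mk2_c0]; exact hx)
    refine ⟨hneg, hpos, ?_⟩
    rw [ssubset_iff_of_subset (by simp only [singleton_subset_iff]; exact rfl)]
    -- find a nonzero point on the level set via IVT along a path avoiding 0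
    set γ : ℝ → Euc 2 := fun s => !₂[s, 1 - s^2] with hγ
    have hγc : Continuous γ :=
      continuous_mk2' _ _ continuous_id (by continuity)
    have hγm1 : γ (-1) = (!₂[(-1:ℝ), 0] : Euc 2) := by
      rw [hγ]; norm_num
    have hγ1 : γ 1 = (!₂[(1:ℝ), 0] : Euc 2) := by
      rw [hγ]; norm_num
    have hv1 : τ (γ 1) < τ 0 := by rw [hγ1]; exact hpos 1 one_pos
    have hvm1 : τ 0 < τ (γ (-1)) := by rw [hγm1]; exact hneg (-1) (by norm_num)
    have key := intermediate_value_Icc' (by norm_num : (-1:ℝ) ≤ 1)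
      ((hτc.comp hγc).continuousOn (s := Icc (-1:ℝ) 1))
    have hmem : τ 0 ∈ Icc ((τ ∘ γ) 1) ((τ ∘ γ) (-1)) :=
      ⟨le_of_lt hv1, le_of_lt hvm1⟩
    obtain ⟨s, -, heq⟩ := key hmem
    refine ⟨γ s, heq, ?_⟩
    simp only [mem_singleton_iff]
    intro h
    have h0 : s = 0 := by
      have := congrArg (fun v : Euc 2 => v 0) h
      simpa [hγ] using this
    have h1 : 1 - s^2 = 0 := by
      have := congrArg (fun v : Euc 2 => v 1) h
      simpa [hγ] using this
    rw [h0] at h1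
    norm_num at h1
end
end

section
/- Let l ∈ ℕ, let χ: ℝ → (0,∞) be C^l, and let X: ℝ² → ℝ², X(x,y) = (χ(y), 0), whose flow is Φ_t(x,y) = (x + tχ(y), y). Let K = [0,1] × [0,1] and suppose τ: ℝ² → ℝ is a C^l function with ∇τ(p)·X(p) = −1 for all p ∈ K. If τ is of class C^{l+1} on some nonempty open set V contained in the interior of K, then there exists a nonempty open interval I ⊆ ℝ on which χ is of class C^{l+1}. In particular, if χ is nowhere C^{l+1}, then τ is not C^{l+1} on any nonempty open subset of K. -/
open Set

noncomputable section

/-- Remark on optimal regularity. For `X(x,y) = (χ(y), 0)` with `χ > 0` of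
class `C^l`, if a `C^l` function `τ` has orbital derivative `∇τ·X ≡ -1` on `K = [0,1]²` and is
`C^{l+1}` on a nonempty open subset of the interior of `K`, then `χ` is `C^{l+1}` on some
nonempty open interval. In particular, if `χ` is nowhere `C^{l+1}`, then `τ` is not `C^{l+1}`
on any nonempty open subset of `K`. -/
theorem regularity_of_prescribed_orbital_derivative
    (l : ℕ) (hl : 1 ≤ l) (χ : ℝ → ℝ) (hχ : ContDiff ℝ (l : ℕ∞) χ)
    (hχpos : ∀ y, 0 < χ y)
    (τ : ℝ × ℝ → ℝ) (hτ : ContDiff ℝ (l : ℕ∞) τ)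
    (hderiv : ∀ p ∈ Icc (0:ℝ) 1 ×ˢ Icc (0:ℝ) 1, fderiv ℝ τ p (χ p.2, 0) = -1) :
    ∀ V : Set (ℝ × ℝ), IsOpen V → V.Nonempty →
      V ⊆ interior (Icc (0:ℝ) 1 ×ˢ Icc (0:ℝ) 1) →
      ContDiffOn ℝ ((l + 1 : ℕ) : ℕ∞) τ V →
      ∃ a b : ℝ, a < b ∧ ContDiffOn ℝ ((l + 1 : ℕ) : ℕ∞) χ (Ioo a b) := by
  intro V hVopen hVne hVsub hτV
  obtain ⟨p, hpV⟩ := hVne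
  obtain ⟨r, hr, hball⟩ := Metric.isOpen_iff.1 hVopen p hpV
  have hτdiff : Differentiable ℝ τ := hτ.differentiable (by exact_mod_cast (by omega : l ≠ 0))
  -- interior of K
  have hint : interior (Icc (0:ℝ) 1 ×ˢ Icc (0:ℝ) 1) = Ioo (0:ℝ) 1 ×ˢ Ioo (0:ℝ) 1 := by
    rw [interior_prod_eq, interior_Icc]
  set x₀ := p.1 - r/3 with hx₀
  set x₁ := p.1 + r/3 with hx₁
  set a := p.2 - r/3 with ha
  set b := p.2 + r/3 with hb
  have hx01 : x₀ < x₁ := by simp [hx₀, hx₁]; linarith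
  have hmem : ∀ y ∈ Ioo a b, ∀ x ∈ Icc x₀ x₁, (x, y) ∈ Metric.ball p r := by
    intro y hy x hx
    rw [Metric.mem_ball, Prod.dist_eq]
    simp only [Real.dist_eq]
    rw [max_lt_iff]
    constructor
    · rw [abs_lt]; simp only [hx₀, hx₁, mem_Icc] at hx; constructor <;> linarith [hx.1, hx.2]
    · rw [abs_lt]; simp only [ha, hb, mem_Ioo] at hy; constructor <;> linarith [hy.1, hy.2]
  have hmemV : ∀ y ∈ Ioo a b, ∀ x ∈ Icc x₀ x₁, (x, y) ∈ V :=
    fun y hy x hx => hball (hmem y hy x hx)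
  have hmemK : ∀ y ∈ Ioo a b, ∀ x ∈ Icc x₀ x₁, (x, y) ∈ Icc (0:ℝ) 1 ×ˢ Icc (0:ℝ) 1 := by
    intro y hy x hx
    have h0 := hVsub (hmemV y hy x₀ (left_mem_Icc.2 hx01.le))
    have h1 := hVsub (hmemV y hy x₁ (right_mem_Icc.2 hx01.le))
    rw [hint] at h0 h1
    simp only [mem_prod, mem_Ioo] at h0 h1
    simp only [mem_prod, mem_Icc, mem_Icc] at hx ⊢
    exact ⟨⟨le_trans h0.1.1.le hx.1, le_trans hx.2 h1.1.2.le⟩, h0.2.1.le, h0.2.2.le⟩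
  -- key identity
  have key : ∀ y ∈ Ioo a b, τ (x₁, y) = τ (x₀, y) - (x₁ - x₀) / χ y := by
    intro y hy
    have hD : ∀ x ∈ Icc x₀ x₁,
        HasDerivAt (fun x => τ (x, y)) (-(χ y)⁻¹) x := by
      intro x hx
      have hq : (x, y) ∈ Icc (0:ℝ) 1 ×ˢ Icc (0:ℝ) 1 := hmemK y hy x hx
      have h1 : HasDerivAt (fun x : ℝ => (x, y)) ((1:ℝ), (0:ℝ)) x := by
        simpa using ((hasDerivAt_id x).prodMk (hasDerivAt_const x y))
      have h2 : HasDerivAt (fun x => τ (x, y)) (fderiv ℝ τ (x, y) (1, 0)) x :=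
        (hτdiff (x, y)).hasFDerivAt.comp_hasDerivAt x h1
      have h3 : fderiv ℝ τ (x, y) (χ y, 0) = -1 := hderiv (x, y) hq
      have h4 : (χ y • ((1:ℝ), (0:ℝ))) = ((χ y), (0:ℝ)) := by simp
      have h5 : χ y * fderiv ℝ τ (x, y) (1, 0) = -1 := by
        rw [← h3, ← h4, map_smul]; simp [smul_eq_mul]
      have hne := (hχpos y).ne'
      have h6 : fderiv ℝ τ (x, y) (1, 0) = -1 / χ y := by
        rw [eq_div_iff hne, mul_comm]; exact h5
      rw [neg_div, one_div] at h6
      rwa [h6] at h2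
    have hcont : ContinuousOn (fun x => τ (x, y) + (χ y)⁻¹ * x) (Icc x₀ x₁) :=
      fun x hx => ((hD x hx).continuousAt.add (by fun_prop)).continuousWithinAt
    have hzero : ∀ x ∈ Ico x₀ x₁,
        HasDerivWithinAt (fun x => τ (x, y) + (χ y)⁻¹ * x) 0 (Ici x) x := by
      intro x hx
      have := ((hD x (Ico_subset_Icc_self hx)).add
        ((hasDerivAt_id x).const_mul ((χ y)⁻¹)))
      have h' := this.hasDerivWithinAt (s := Ici x)
      simp only [id, mul_one, neg_add_cancel] at h'
      exact h'
    have := constant_of_has_deriv_right_zero hcont hzero x₁ (right_mem_Icc.2 hx01.le)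
    have hχne : χ y ≠ 0 := (hχpos y).ne'
    field_simp at this ⊢
    linarith [this]
  -- χ is C^{l+1} on Ioo a b
  refine ⟨a, b, by simp [ha, hb]; linarith, ?_⟩
  have hcomp : ∀ x', x' ∈ Icc x₀ x₁ →
      ContDiffOn ℝ ((l + 1 : ℕ) : ℕ∞) (fun y => τ (x', y)) (Ioo a b) := by
    intro x' hx'
    refine hτV.comp (f := fun y : ℝ => ((x' : ℝ), y)) ?_ ?_
    · exact (contDiff_const.prodMk contDiff_id).contDiffOn
    · intro y hy; exact hmemV y hy x' hx'
  have hnum : ContDiffOn ℝ ((l + 1 : ℕ) : ℕ∞)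
      (fun y => (x₁ - x₀) / (τ (x₀, y) - τ (x₁, y))) (Ioo a b) := by
    refine ContDiffOn.div contDiffOn_const
      ((hcomp x₀ (left_mem_Icc.2 hx01.le)).sub (hcomp x₁ (right_mem_Icc.2 hx01.le))) ?_
    intro y hy
    rw [key y hy]
    have hχne : χ y ≠ 0 := (hχpos y).ne'
    have : (x₁ - x₀) / χ y > 0 := div_pos (by linarith) (hχpos y)
    intro h
    rw [sub_sub_cancel] at h
    exact this.ne' h
  refine hnum.congr ?_
  intro y hy
  rw [key y hy, sub_sub_cancel]
  have hχne : χ y ≠ 0 := (hχpos y).ne'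
  have hne' : x₁ - x₀ ≠ 0 := sub_ne_zero.2 hx01.ne'
  field_simp
end
end

section
/- Let U ⊆ ℝⁿ be open, X: U → ℝⁿ a vector field with complete flow Φ, R_X its chain recurrent set (an invariant set), and τ: U → ℝ continuous and strictly decreasing along orbits outside R_X (i.e. τ(Φ_t(p)) < τ(p) for all t > 0 and p ∈ U \ R_X). Let s_k < s_i be real numbers, let W_{s_k} ⊆ {τ = s_k} \ R_X and W_{s_i} ⊆ {τ = s_i} \ R_X, and let i < k be natural numbers. Then Φ([k, k+1] × closure(W_{s_k})) ∩ Φ((−(i+1), i+1) × W_{s_i}) = ∅; that is, if p ∈ closure(W_{s_k}) ⊆ {τ = s_k} \ R_X, t_p ∈ [k, k+1], q ∈ W_{s_i}, and t_q ∈ (−(i+1), i+1), then Φ_{t_p}(p) ≠ Φ_{t_q}(q). -/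
open Set

noncomputable section

lemma flow_add {n : ℕ} {X : Euc n → Euc n} {U : Set (Euc n)} {Φ : ℝ → Euc n → Euc n}
    (hΦ : IsCompleteFlow X U Φ) {p : Euc n} (hp : p ∈ U) (s t : ℝ) :
    Φ s (Φ t p) = Φ (s + t) p := by
  obtain ⟨hmem, hzero, hderiv, huniq⟩ := hΦ
  have h := huniq (Φ t p) (hmem p hp t) (fun u => Φ (u + t) p)
    (by simp) (fun u => hmem p hp (u + t))
    (fun u => by
      have h1 := hderiv p hp (u + t)
      have h2 : HasDerivAt (fun u : ℝ => u + t) 1 u := (hasDerivAt_id u).add_const t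
      have := h1.scomp u h2
      simpa [Function.comp_def] using this)
  exact (h s).symm

/-- Flow boxes around level sets at different levels and with the stated time
parameters are disjoint: `Φ([k,k+1] × closure W_{s_k}) ∩ Φ((-(i+1),i+1) × W_{s_i}) = ∅`. -/
theorem flowBoxes_disjoint
    {n : ℕ} (U : Set (Euc n)) (hU : IsOpen U)
    (X : Euc n → Euc n) (Φ : ℝ → Euc n → Euc n) (hΦ : IsCompleteFlow X U Φ)
    (τ : Euc n → ℝ) (hτc : ContinuousOn τ U)
    (hdec : ∀ p ∈ U \ chainRecurrentSet Φ U, ∀ t > (0:ℝ), τ (Φ t p) < τ p)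
    (hinv : ∀ t : ℝ, Φ t '' chainRecurrentSet Φ U = chainRecurrentSet Φ U)
    (i k : ℕ) (hik : i < k) (sk si : ℝ) (hs : sk < si)
    (Wk Wi : Set (Euc n))
    (hWk : closure Wk ⊆ {p ∈ U | τ p = sk} \ chainRecurrentSet Φ U)
    (hWi : Wi ⊆ {p ∈ U | τ p = si} \ chainRecurrentSet Φ U) :
    ∀ p ∈ closure Wk, ∀ tp ∈ Icc (k:ℝ) ((k:ℝ)+1), ∀ q ∈ Wi,
      ∀ tq ∈ Ioo (-((i:ℝ)+1)) ((i:ℝ)+1), Φ tp p ≠ Φ tq q := by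
  intro p hp tp htp q hq tq htq heq
  have hpU : p ∈ U := (hWk hp).1.1
  have hqU : q ∈ U := (hWi hq).1.1
  have hpR : p ∉ chainRecurrentSet Φ U := (hWk hp).2
  have hkey : Φ (tp - tq) p = q := by
    have h1 : Φ (-tq) (Φ tp p) = Φ (tp - tq) p := by
      rw [flow_add ⟨hΦ.1, hΦ.2.1, hΦ.2.2.1, hΦ.2.2.2⟩ hpU]; ring_nf
    have h2 : Φ (-tq) (Φ tq q) = q := by
      rw [flow_add ⟨hΦ.1, hΦ.2.1, hΦ.2.2.1, hΦ.2.2.2⟩ hqU]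
      simpa using hΦ.2.1 q hqU
    rw [← h1, heq, h2]
  have hpos : 0 < tp - tq := by
    have hk : (i:ℝ) + 1 ≤ (k:ℝ) := by exact_mod_cast hik
    have : tq < (k:ℝ) := lt_of_lt_of_le htq.2 hk
    linarith [htp.1]
  have := hdec p ⟨hpU, hpR⟩ (tp - tq) hpos
  rw [hkey, (hWi hq).1.2, (hWk hp).1.2] at this
  linarith
end
end

section
/- Let k ∈ ℕ, n ≥ 1, W ⊆ ℝ^{n−1} with closure W̄, and let τ: [−(k+1), k+1] × W̄ → ℝ be a C^l function (l ∈ ℕ ∪ {∞}) with ∂_t τ(t,q) < 0 for all (t,q). Let μ: ℝ → [0,1] be a smooth nondecreasing function with μ ≡ 0 on (−∞, −3/2] and μ ≡ 1 on [−5/4, ∞). Define τ₁(t,q) := (1 − μ(t))τ(t,q) + μ(t)[τ(−1,q) − (t + 3/2)]. Then τ₁ is C^l, ∂_t τ₁(t,q) < 0 for all (t,q) ∈ [−(k+1), k+1] × W̄, ∂_t τ₁ ≡ −1 on [−5/4, k+1] × W̄, and τ₁ = τ on [−(k+1), −3/2] × W̄. -/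
open Set

noncomputable section

theorem mono_deriv_nonneg' (μ : ℝ → ℝ) (hμmono : Monotone μ) (t m : ℝ)
    (h : HasDerivAt μ m t) : 0 ≤ m := by
  have hs := hasDerivAt_iff_tendsto_slope.mp h
  refine ge_of_tendsto hs ?_
  filter_upwards [self_mem_nhdsWithin] with x hx
  rw [slope_def_field]
  rcases lt_or_gt_of_ne (Ne.symm hx) with h1 | h1
  · exact div_nonneg (by simpa using hμmono h1.le) (by linarith)
  · exact div_nonneg_iff.mpr (Or.inr ⟨by simpa using hμmono h1.le, by linarith⟩)

/-- first step of the Lemma. Interpolating `τ` with the affine function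
`τ(-1,q) - (t + 3/2)` via the cutoff `μ` produces a `C^l` function `τ₁` that is strictly
decreasing in `t`, has `∂_t τ₁ ≡ -1` on `[-5/4, k+1] × W̄`, and agrees with `τ` on
`[-(k+1), -3/2] × W̄`. -/
theorem first_step_interpolation
    (n : ℕ) (hn : 1 ≤ n) (k : ℕ) (l : ℕ∞)
    (W : Set (EuclideanSpace ℝ (Fin (n - 1))))
    (τ : ℝ × EuclideanSpace ℝ (Fin (n - 1)) → ℝ)
    (hτ : ContDiffOn ℝ l τ (Icc (-((k:ℝ)+1)) ((k:ℝ)+1) ×ˢ closure W))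
    (hτd : ∀ q ∈ closure W, ∀ t ∈ Icc (-((k:ℝ)+1)) ((k:ℝ)+1),
      ∃ d < (0:ℝ), HasDerivWithinAt (fun s => τ (s, q)) d (Icc (-((k:ℝ)+1)) ((k:ℝ)+1)) t)
    (μ : ℝ → ℝ) (hμ : ContDiff ℝ ((⊤ : ℕ∞) : WithTop ℕ∞) μ) (hμmono : Monotone μ)
    (hμ01 : ∀ t, μ t ∈ Icc (0:ℝ) 1)
    (hμ0 : ∀ t ≤ (-3/2 : ℝ), μ t = 0) (hμ1 : ∀ t, (-5/4 : ℝ) ≤ t → μ t = 1) :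
    ContDiffOn ℝ l
      (fun p => (1 - μ p.1) * τ p + μ p.1 * (τ (-1, p.2) - (p.1 + 3/2)))
      (Icc (-((k:ℝ)+1)) ((k:ℝ)+1) ×ˢ closure W) ∧
    (∀ q ∈ closure W, ∀ t ∈ Icc (-((k:ℝ)+1)) ((k:ℝ)+1),
      ∃ d < (0:ℝ), HasDerivWithinAt
        (fun s => (1 - μ s) * τ (s, q) + μ s * (τ (-1, q) - (s + 3/2))) d
        (Icc (-((k:ℝ)+1)) ((k:ℝ)+1)) t) ∧
    (∀ q ∈ closure W, ∀ t ∈ Icc (-5/4 : ℝ) ((k:ℝ)+1),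
      HasDerivWithinAt
        (fun s => (1 - μ s) * τ (s, q) + μ s * (τ (-1, q) - (s + 3/2))) (-1)
        (Icc (-((k:ℝ)+1)) ((k:ℝ)+1)) t) ∧
    ∀ p ∈ Icc (-((k:ℝ)+1)) (-3/2 : ℝ) ×ˢ closure W,
      (1 - μ p.1) * τ p + μ p.1 * (τ (-1, p.2) - (p.1 + 3/2)) = τ p := by
  set S : Set ℝ := Icc (-((k:ℝ)+1)) ((k:ℝ)+1) with hS
  have hk0 : (0:ℝ) ≤ (k:ℝ) := Nat.cast_nonneg k
  have hm1S : (-1:ℝ) ∈ S := ⟨by linarith, by linarith⟩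
  have hμdiff : Differentiable ℝ μ := hμ.differentiable (by simp)
  have hμ'nn : ∀ t : ℝ, 0 ≤ deriv μ t :=
    fun t => mono_deriv_nonneg' μ hμmono t _ (hμdiff t).hasDerivAt
  have hμ'lo : ∀ t ≤ (-3/2 : ℝ), deriv μ t = 0 := by
    intro t ht
    refine IsLocalMin.deriv_eq_zero (Filter.Eventually.of_forall fun s => ?_)
    rw [hμ0 t ht]; exact (hμ01 s).1
  have hμ'hi : ∀ t : ℝ, (-5/4 : ℝ) ≤ t → deriv μ t = 0 := by
    intro t ht
    refine IsLocalMax.deriv_eq_zero (Filter.Eventually.of_forall fun s => ?_)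
    rw [hμ1 t ht]; exact (hμ01 s).2
  -- key derivative computation
  have key : ∀ q : EuclideanSpace ℝ (Fin (n-1)), ∀ t d : ℝ,
      HasDerivWithinAt (fun s => τ (s, q)) d S t →
      HasDerivWithinAt (fun s => (1 - μ s) * τ (s, q) + μ s * (τ (-1, q) - (s + 3/2)))
        (-(deriv μ t) * τ (t, q) + (1 - μ t) * d +
          (deriv μ t * (τ (-1, q) - (t + 3/2)) + μ t * (-1))) S t := by
    intro q t d hd
    have hμ't : HasDerivAt μ (deriv μ t) t := (hμdiff t).hasDerivAt
    have h1 : HasDerivAt (fun s => 1 - μ s) (-(deriv μ t)) t := by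
      simpa using hμ't.const_sub 1
    have h2 := h1.hasDerivWithinAt.mul hd
    have h3 : HasDerivAt (fun s : ℝ => τ (-1, q) - (s + 3/2)) (-1) t := by
      simpa using ((hasDerivAt_id t).add_const (3/2 : ℝ)).const_sub (τ (-1, q))
    have h4 := (hμ't.hasDerivWithinAt (s := S)).mul (h3.hasDerivWithinAt (s := S))
    exact h2.add h4
  refine ⟨?_, ?_, ?_, ?_⟩
  · -- ContDiffOn
    have hl : (l : WithTop ℕ∞) ≤ ((⊤ : ℕ∞) : WithTop ℕ∞) := by exact_mod_cast le_top
    have hμl : ContDiff ℝ (l : WithTop ℕ∞) μ := hμ.of_le hl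
    have hone : ContDiff ℝ (l : WithTop ℕ∞)
        (fun p : ℝ × EuclideanSpace ℝ (Fin (n-1)) => 1 - μ p.1) :=
      contDiff_const.sub (hμl.comp contDiff_fst)
    have hμfst : ContDiff ℝ (l : WithTop ℕ∞)
        (fun p : ℝ × EuclideanSpace ℝ (Fin (n-1)) => μ p.1) := hμl.comp contDiff_fst
    have hg : ContDiff ℝ (l : WithTop ℕ∞)
        (fun p : ℝ × EuclideanSpace ℝ (Fin (n-1)) => ((-1 : ℝ), p.2)) :=
      contDiff_const.prodMk contDiff_snd
    have hmaps : MapsTo (fun p : ℝ × EuclideanSpace ℝ (Fin (n-1)) => ((-1 : ℝ), p.2))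
        (S ×ˢ closure W) (S ×ˢ closure W) := by
      intro p hp; exact ⟨hm1S, hp.2⟩
    have hτ2 : ContDiffOn ℝ (l : WithTop ℕ∞)
        (fun p : ℝ × EuclideanSpace ℝ (Fin (n-1)) => τ ((-1 : ℝ), p.2))
        (S ×ˢ closure W) := hτ.comp hg.contDiffOn hmaps
    have haff : ContDiff ℝ (l : WithTop ℕ∞)
        (fun p : ℝ × EuclideanSpace ℝ (Fin (n-1)) => p.1 + 3/2) :=
      contDiff_fst.add contDiff_const
    exact (hone.contDiffOn.mul hτ).add
      (hμfst.contDiffOn.mul (hτ2.sub haff.contDiffOn))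
  · -- strictly negative derivative
    intro q hq t ht
    obtain ⟨d, hd0, hd⟩ := hτd q hq t ht
    refine ⟨_, ?_, key q t d hd⟩
    -- show the derivative value is negative
    have hμt0 := (hμ01 t).1
    have hμt1 := (hμ01 t).2
    by_cases h15 : (-5/4 : ℝ) ≤ t
    · rw [hμ'hi t h15, hμ1 t h15]; nlinarith
    · by_cases h32 : t ≤ (-3/2 : ℝ)
      · rw [hμ'lo t h32, hμ0 t h32]; nlinarith
      · -- middle region: -3/2 < t < -5/4
        push_neg at h15 h32
        -- τ is strictly decreasing in t on S
        have hcont : ContinuousOn (fun s => τ (s, q)) S := by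
          intro x hx
          obtain ⟨d', _, hd'⟩ := hτd q hq x hx
          exact hd'.continuousWithinAt
        have hanti : StrictAntiOn (fun s => τ (s, q)) S := by
          refine strictAntiOn_of_deriv_neg (convex_Icc _ _) hcont ?_
          intro x hx
          rw [interior_Icc] at hx
          obtain ⟨d', hd'0, hd'⟩ := hτd q hq x ⟨hx.1.le, hx.2.le⟩
          rw [(hd'.hasDerivAt (Icc_mem_nhds hx.1 hx.2)).deriv]
          exact hd'0
        have hB : τ (-1, q) - (t + 3/2) - τ (t, q) < 0 := by
          have := hanti ht hm1S (by linarith : t < -1)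
          simp only at this
          linarith
        have hμ'B : deriv μ t * (τ (-1, q) - (t + 3/2) - τ (t, q)) ≤ 0 :=
          mul_nonpos_of_nonneg_of_nonpos (hμ'nn t) hB.le
        rcases eq_or_lt_of_le hμt0 with h0 | h0
        · rw [← h0]; nlinarith
        · nlinarith [mul_nonpos_of_nonneg_of_nonpos (by linarith : (0:ℝ) ≤ 1 - μ t) hd0.le]
  · -- derivative ≡ -1 on [-5/4, k+1]
    intro q hq t ht
    by_cases hmem : t ∈ S
    · obtain ⟨d, hd0, hd⟩ := hτd q hq t hmem
      have hkey := key q t d hd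
      have hD : -(deriv μ t) * τ (t, q) + (1 - μ t) * d +
          (deriv μ t * (τ (-1, q) - (t + 3/2)) + μ t * (-1)) = -1 := by
        rw [hμ'hi t ht.1, hμ1 t ht.1]; ring
      rwa [hD] at hkey
    · refine HasDerivWithinAt.mono ?_ (subset_refl S)
      have : t ∉ closure S := by rwa [isClosed_Icc.closure_eq]
      exact hasDerivWithinAt_iff_hasFDerivWithinAt.mpr
        (HasFDerivWithinAt.of_notMem_closure this)
  · -- agreement on [-(k+1), -3/2]
    intro p hp
    rw [hμ0 p.1 hp.1.2]; ring
end
end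

section
/- Let W ⊆ ℝ^m be open, φ: W → ℝ a C^l function (l ∈ ℕ ∪ {∞}), a < b real numbers with φ(W) ⊆ (a,b), and τ: (a,b) × W → ℝ a C^l function such that τ(u,q) = τ(φ(q), q) − u + φ(q) for all (u,q) in some open neighborhood of the graph {(φ(q), q) : q ∈ W}. Define σ: (a,b) × W → ℝ by σ(u,q) := τ(u,q) for u ≤ φ(q) and σ(u,q) := τ(φ(q), q) − u + φ(q) for u ≥ φ(q). Then σ is well defined and C^l, ∂_u σ ≡ −1 on {(u,q) : u ≥ φ(q)}, and if ∂_u τ < 0 everywhere then ∂_u σ < 0 everywhere. -/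
open Set

noncomputable section

/-- second step of the Lemma: the functions `σ_p`. If `τ` coincides with the
affine extension `τ(φ(q),q) - u + φ(q)` near the graph of `φ`, then the piecewise function `σ`
(equal to `τ` for `u ≤ φ(q)` and to the affine extension for `u ≥ φ(q)`) is well defined and
`C^l`, satisfies `∂_u σ ≡ -1` on `{u ≥ φ(q)}`, and is strictly decreasing in `u` whenever `τ`
is. -/
theorem piecewise_affine_extension
    (m : ℕ) (l : ℕ∞) (W : Set (EuclideanSpace ℝ (Fin m))) (hW : IsOpen W)
    (φ : EuclideanSpace ℝ (Fin m) → ℝ) (hφ : ContDiffOn ℝ l φ W)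
    (a b : ℝ) (hab : a < b) (hφab : ∀ q ∈ W, φ q ∈ Ioo a b)
    (τ : ℝ × EuclideanSpace ℝ (Fin m) → ℝ)
    (hτ : ContDiffOn ℝ l τ (Ioo a b ×ˢ W))
    (hloc : ∃ N : Set (ℝ × EuclideanSpace ℝ (Fin m)), IsOpen N ∧
      (∀ q ∈ W, (φ q, q) ∈ N) ∧ ∀ p ∈ N, τ p = τ (φ p.2, p.2) - p.1 + φ p.2) :
    (∀ u : ℝ, ∀ q ∈ W,
      (u ≤ φ q → (if u ≤ φ q then τ (u, q) else τ (φ q, q) - u + φ q) = τ (u, q)) ∧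
      (φ q ≤ u → (if u ≤ φ q then τ (u, q) else τ (φ q, q) - u + φ q) =
        τ (φ q, q) - u + φ q)) ∧
    ContDiffOn ℝ l
      (fun p => if p.1 ≤ φ p.2 then τ p else τ (φ p.2, p.2) - p.1 + φ p.2)
      (Ioo a b ×ˢ W) ∧
    (∀ u ∈ Ioo a b, ∀ q ∈ W, φ q ≤ u →
      HasDerivAt (fun s => if s ≤ φ q then τ (s, q) else τ (φ q, q) - s + φ q) (-1) u) ∧
    ((∀ u ∈ Ioo a b, ∀ q ∈ W, ∃ d < (0:ℝ), HasDerivAt (fun s => τ (s, q)) d u) →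
      ∀ u ∈ Ioo a b, ∀ q ∈ W, ∃ d < (0:ℝ),
        HasDerivAt (fun s => if s ≤ φ q then τ (s, q) else τ (φ q, q) - s + φ q) d u) := by
  obtain ⟨N, hNopen, hNgraph, hNeq⟩ := hloc
  set S : Set (ℝ × EuclideanSpace ℝ (Fin m)) := Ioo a b ×ˢ W with hS
  set g : ℝ × EuclideanSpace ℝ (Fin m) → ℝ :=
    fun p => τ (φ p.2, p.2) - p.1 + φ p.2 with hg
  -- smoothness of the affine extension on all of S
  have hφsnd : ContDiffOn ℝ l (fun p : ℝ × EuclideanSpace ℝ (Fin m) => φ p.2) S := by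
    apply hφ.comp contDiff_snd.contDiffOn
    intro p hp; exact hp.2
  have hmaps : ∀ p ∈ S, ((φ p.2, p.2) : ℝ × EuclideanSpace ℝ (Fin m)) ∈ S := by
    intro p hp; exact ⟨hφab p.2 hp.2, hp.2⟩
  have hgC : ContDiffOn ℝ l g S := by
    have h1 : ContDiffOn ℝ l (fun p : ℝ × EuclideanSpace ℝ (Fin m) => τ (φ p.2, p.2)) S := by
      apply hτ.comp (hφsnd.prodMk contDiff_snd.contDiffOn) hmaps
    exact (h1.sub contDiff_fst.contDiffOn).add hφsnd
  -- derivative of the affine function in the first variable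
  have haff : ∀ (q : EuclideanSpace ℝ (Fin m)) (u : ℝ),
      HasDerivAt (fun s => τ (φ q, q) - s + φ q) (-1) u := by
    intro q u
    have h := (((hasDerivAt_id u).const_sub (τ (φ q, q))).add_const (φ q))
    simpa using h
  refine ⟨?_, ?_, ?_, ?_⟩
  · -- well-definedness
    intro u q hq
    constructor
    · intro h; simp [h]
    · intro h
      by_cases h' : u ≤ φ q
      · have : u = φ q := le_antisymm h' h
        simp [h', this]
      · simp [h']
  · -- smoothness
    apply contDiffOn_of_locally_contDiffOn
    intro p hp
    rcases lt_trichotomy p.1 (φ p.2) with hlt | heq | hgt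
    · -- strictly below the graph: σ = τ
      refine ⟨(univ ×ˢ W) ∩
        (fun x : ℝ × EuclideanSpace ℝ (Fin m) => φ x.2 - x.1) ⁻¹' Ioi 0, ?_,
        ⟨⟨trivial, hp.2⟩, sub_pos.mpr hlt⟩, ?_⟩
      · exact ContinuousOn.isOpen_inter_preimage
          ((hφ.continuousOn.comp continuous_snd.continuousOn (fun x hx => hx.2)).sub
            continuous_fst.continuousOn) (isOpen_univ.prod hW) isOpen_Ioi
      · apply (hτ.mono inter_subset_left).congr
        intro x hx
        have : x.1 ≤ φ x.2 := (sub_pos.mp hx.2.2).le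
        simp [this]
    · -- on the graph: σ = g near p, via N
      refine ⟨N, hNopen, ?_, ?_⟩
      · have : p = (φ p.2, p.2) := by
          ext : 1
          · exact heq
          · rfl
        rw [this]; exact hNgraph p.2 hp.2
      · apply (hgC.mono inter_subset_left).congr
        intro x hx
        by_cases h : x.1 ≤ φ x.2
        · simp only [h, if_true]
          exact hNeq x hx.2
        · simp [h, g]
    · -- strictly above the graph: σ = g
      refine ⟨(univ ×ˢ W) ∩
        (fun x : ℝ × EuclideanSpace ℝ (Fin m) => x.1 - φ x.2) ⁻¹' Ioi 0, ?_,
        ⟨⟨trivial, hp.2⟩, sub_pos.mpr hgt⟩, ?_⟩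
      · exact ContinuousOn.isOpen_inter_preimage
          (continuous_fst.continuousOn.sub
            (hφ.continuousOn.comp continuous_snd.continuousOn (fun x hx => hx.2)))
          (isOpen_univ.prod hW) isOpen_Ioi
      · apply (hgC.mono inter_subset_left).congr
        intro x hx
        have h : ¬ x.1 ≤ φ x.2 := not_le.mpr (sub_pos.mp hx.2.2)
        simp [h, g]
  · -- derivative -1 on {u ≥ φ q}
    intro u hu q hq hge
    rcases eq_or_lt_of_le hge with heq | hlt
    · -- u = φ q : use N
      have hmem : ((u, q) : ℝ × EuclideanSpace ℝ (Fin m)) ∈ N := by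
        rw [← heq] at *
        exact hNgraph q hq
      have hev : ∀ᶠ s in nhds u, ((s, q) : ℝ × EuclideanSpace ℝ (Fin m)) ∈ N := by
        have hcont : Continuous (fun s : ℝ => ((s, q) : ℝ × EuclideanSpace ℝ (Fin m))) :=
          continuous_id.prodMk continuous_const
        exact hcont.continuousAt.eventually_mem (hNopen.mem_nhds hmem)
      apply (haff q u).congr_of_eventuallyEq
      filter_upwards [hev] with s hs
      by_cases h : s ≤ φ q
      · simp only [h, if_true]
        exact hNeq (s, q) hs
      · simp [h]
    · -- φ q < u
      apply (haff q u).congr_of_eventuallyEq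
      filter_upwards [isOpen_Ioi.eventually_mem (show u ∈ Ioi (φ q) from hlt)] with s hs
      have h : ¬ s ≤ φ q := not_le.mpr hs
      simp [h]
  · -- strict monotonicity
    intro hyp u hu q hq
    rcases le_or_gt (φ q) u with hge | hlt
    · refine ⟨-1, by norm_num, ?_⟩
      -- reuse the previous argument
      rcases eq_or_lt_of_le hge with heq | hlt'
      · have hmem : ((u, q) : ℝ × EuclideanSpace ℝ (Fin m)) ∈ N := by
          rw [← heq] at *
          exact hNgraph q hq
        have hev : ∀ᶠ s in nhds u, ((s, q) : ℝ × EuclideanSpace ℝ (Fin m)) ∈ N := by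
          have hcont : Continuous (fun s : ℝ => ((s, q) : ℝ × EuclideanSpace ℝ (Fin m))) :=
            continuous_id.prodMk continuous_const
          exact hcont.continuousAt.eventually_mem (hNopen.mem_nhds hmem)
        apply (haff q u).congr_of_eventuallyEq
        filter_upwards [hev] with s hs
        by_cases h : s ≤ φ q
        · simp only [h, if_true]
          exact hNeq (s, q) hs
        · simp [h]
      · apply (haff q u).congr_of_eventuallyEq
        filter_upwards [isOpen_Ioi.eventually_mem (show u ∈ Ioi (φ q) from hlt')] with s hs
        have h : ¬ s ≤ φ q := not_le.mpr hs
        simp [h]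
    · obtain ⟨d, hd, hder⟩ := hyp u hu q hq
      refine ⟨d, hd, ?_⟩
      apply hder.congr_of_eventuallyEq
      filter_upwards [isOpen_Iio.eventually_mem (show u ∈ Iio (φ q) from hlt)] with s hs
      simp only [mem_Iio] at hs
      simp [hs.le]
end
end
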